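/- arXiv:1409.2057 — 5 statements merged into one kernel-verified Lean document; each statement's English description precedes it below -/
import Mathlib

section
/- The number D^M_n of perfect matchings of K_{2n} that share no edge with a fixed perfect matching satisfies the recurrence D^M_n = 2(n-1)(D^M_{n-1} + D^M_{n-2}) with D^M_0 = 1 and D^M_1 = 0. -/
open Equiv Equiv.Perm Function

section Helpers

variable {α β : Type*}

def IsPMG (f : Equiv.Perm α) : Prop := Function.Involutive f ∧ ∀ i, f i ≠ i

noncomputable def pmc (α : Type*) (e : Equiv.Perm α) : ℕ :=
  Nat.card {m : Equiv.Perm α // IsPMG m ∧ ∀ i, m i ≠ e i}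

lemma natCard_sigma {ι : Type*} [Fintype ι] (f : ι → Type*) [∀ i, Finite (f i)] :
    Nat.card (Σ i, f i) = ∑ i, Nat.card (f i) := by
  have : ∀ i, Fintype (f i) := fun i => Fintype.ofFinite _
  simp [Nat.card_eq_fintype_card]

def splitE {γ : Type*} (P Q : γ → Prop) [DecidablePred Q] :
    {x // P x} ≃ {x // P x ∧ Q x} ⊕ {x // P x ∧ ¬ Q x} where
  toFun x := if h : Q x.1 then Sum.inl ⟨x.1, x.2, h⟩ else Sum.inr ⟨x.1, x.2, h⟩
  invFun y := Sum.elim (fun a => ⟨a.1, a.2.1⟩) (fun a => ⟨a.1, a.2.1⟩) y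
  left_inv x := by by_cases h : Q x.1 <;> simp [h]
  right_inv y := by
    rcases y with a | a
    · simp [a.2.2]
    · simp [a.2.2]

lemma isPMG_permCongr {b : α ≃ β} {m : Perm α} (h : IsPMG m) : IsPMG (b.permCongr m) := by
  constructor
  · intro x
    simp [Equiv.permCongr_apply, h.1 (b.symm x)]
  · intro x hx
    apply h.2 (b.symm x)
    simpa using congrArg b.symm hx

lemma pmc_congr (b : α ≃ β) (e : Perm α) : pmc α e = pmc β (b.permCongr e) := by
  apply Nat.card_congr
  refine Equiv.subtypeEquiv b.permCongr (fun m => ?_)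
  constructor
  · rintro ⟨hm, hd⟩
    refine ⟨isPMG_permCongr hm, fun i hi => hd (b.symm i) ?_⟩
    simpa using congrArg b.symm hi
  · rintro ⟨hm, hd⟩
    have hm' : IsPMG (b.symm.permCongr (b.permCongr m)) := isPMG_permCongr hm
    have heq : b.symm.permCongr (b.permCongr m) = m := by
      ext x; simp [Equiv.permCongr_apply]
    rw [heq] at hm'
    refine ⟨hm', fun i hi => hd (b i) ?_⟩
    simp [Equiv.permCongr_apply, hi]

lemma cycleType_isPMG [Fintype α] [DecidableEq α] {f : Perm α} (hf : IsPMG f) :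
    f.cycleType = Multiset.replicate (Fintype.card α / 2) 2 := by
  have hsq : f * f = 1 := by ext y; simp [Equiv.Perm.mul_apply, hf.1 y]
  have ho : orderOf f ∣ 2 := orderOf_dvd_of_pow_eq_one (by rw [pow_two]; exact hsq)
  have h2 : ∀ x ∈ f.cycleType, x = 2 := by
    intro x hx
    have hge := Equiv.Perm.two_le_of_mem_cycleType hx
    have hdvd : x ∣ 2 := (Equiv.Perm.dvd_of_mem_cycleType hx).trans ho
    have := Nat.le_of_dvd (by norm_num) hdvd
    omega
  have hrep : f.cycleType = Multiset.replicate f.cycleType.card 2 :=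
    Multiset.eq_replicate_card.mpr h2
  have hsum : f.cycleType.sum = Fintype.card α := by
    rw [Equiv.Perm.sum_cycleType]
    have : f.support = Finset.univ := by
      ext x; simp [Equiv.Perm.mem_support, hf.2 x]
    rw [this, Finset.card_univ]
  rw [hrep] at hsum ⊢
  rw [Multiset.sum_replicate, smul_eq_mul] at hsum
  congr 1
  omega

lemma pmc_eq_of_isPMG [Fintype α] [DecidableEq α] {e e' : Perm α}
    (he : IsPMG e) (he' : IsPMG e') : pmc α e = pmc α e' := by
  have hconj : IsConj e e' := Equiv.Perm.isConj_of_cycleType_eq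
    (by rw [cycleType_isPMG he, cycleType_isPMG he'])
  obtain ⟨σ, hσ⟩ := isConj_iff.mp hconj
  have h2 : (σ : Perm α).permCongr e = e' := by
    ext x
    have := congrFun (congrArg (fun g : Perm α => (g : α → α)) hσ) x
    simpa [Equiv.permCongr_apply, Equiv.Perm.mul_apply] using this
  rw [pmc_congr σ e, h2]

lemma pmc_eq_pmc [Fintype α] [Fintype β] [DecidableEq α] [DecidableEq β]
    (h : Fintype.card α = Fintype.card β) {e : Perm α} {e' : Perm β}
    (he : IsPMG e) (he' : IsPMG e') : pmc α e = pmc β e' := by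
  obtain ⟨b⟩ := Fintype.card_eq.mp h
  rw [pmc_congr b e]
  exact pmc_eq_of_isPMG (isPMG_permCongr he) he'

end Helpers

/-- A perfect matching of `K_{2n}` viewed as a fixed-point-free involution of the
vertex set `Fin (2*n)`. -/
def IsPM {N : ℕ} (f : Equiv.Perm (Fin N)) : Prop :=
  Function.Involutive f ∧ ∀ i, f i ≠ i

/-- The number of perfect matchings of `K_{2n}` sharing no edge with the fixed
perfect matching `e` (note that `m` and `e` share an edge iff `m i = e i` for some `i`). -/
noncomputable def DM (n : ℕ) (e : Equiv.Perm (Fin (2 * n))) : ℕ :=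
  Nat.card {m : Equiv.Perm (Fin (2 * n)) // IsPM m ∧ ∀ i, m i ≠ e i}



lemma card_ne2 [Fintype α] [DecidableEq α] {v u : α} (h : u ≠ v) :
    Fintype.card {x : α // x ≠ v ∧ x ≠ u} + 2 = Fintype.card α := by
  classical
  rw [Fintype.card_subtype]
  have h1 : Finset.filter (fun x => x ≠ v ∧ x ≠ u) Finset.univ
      = Finset.univ \ {v, u} := by
    ext x; simp
  have h2 : ({v, u} : Finset α).card = 2 := by
    rw [Finset.card_insert_of_notMem (by simpa using h.symm), Finset.card_singleton]
  have h3 := Finset.card_le_card (Finset.subset_univ ({v, u} : Finset α))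
  rw [h1, Finset.card_sdiff_of_subset (Finset.subset_univ _), Finset.card_univ, h2]
  rw [Finset.card_univ] at h3
  omega

lemma card_ne4 [Fintype α] [DecidableEq α] {v u w z : α}
    (h1 : u ≠ v) (h2 : w ≠ v) (h3 : w ≠ u) (h4 : z ≠ v) (h5 : z ≠ u) (h6 : z ≠ w) :
    Fintype.card {x : α // x ≠ v ∧ x ≠ u ∧ x ≠ w ∧ x ≠ z} + 4 = Fintype.card α := by
  classical
  rw [Fintype.card_subtype]
  have hf : Finset.filter (fun x => x ≠ v ∧ x ≠ u ∧ x ≠ w ∧ x ≠ z) Finset.univ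
      = Finset.univ \ {v, u, w, z} := by
    ext x; simp
  have hc : ({v, u, w, z} : Finset α).card = 4 := by
    rw [Finset.card_insert_of_notMem (by simp [h1.symm, h2.symm, h4.symm]),
      Finset.card_insert_of_notMem (by simp [h3.symm, h5.symm]),
      Finset.card_insert_of_notMem (by simpa using h6.symm), Finset.card_singleton]
  have h7 := Finset.card_le_card (Finset.subset_univ ({v, u, w, z} : Finset α))
  rw [hf, Finset.card_sdiff_of_subset (Finset.subset_univ _), Finset.card_univ, hc]
  rw [Finset.card_univ] at h7
  omega




lemma caseB [Fintype α] [DecidableEq α] {e : Perm α}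
    (heI : Function.Involutive e) (heF : ∀ i, e i ≠ i)
    {v u : α} (huv : u ≠ v) (huev : u ≠ e v) :
    ∃ eb : Perm {x : α // x ≠ v ∧ x ≠ u}, IsPMG eb ∧
      Nat.card {m : Perm α // ((IsPMG m ∧ ∀ i, m i ≠ e i) ∧ m v = u) ∧ ¬ m (e u) = e v}
        = pmc {x : α // x ≠ v ∧ x ≠ u} eb := by
  classical
  have hmem : ∀ x y : α, e x = y ↔ x = e y := fun x y =>
    ⟨fun h => by rw [← h, heI], fun h => by rw [h, heI]⟩
  have hvev : v ≠ e v := Ne.symm (heF v)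
  have hueu : u ≠ e u := Ne.symm (heF u)
  have heuv : e u ≠ v := fun h => huev ((hmem u v).mp h)
  have heuev : e u ≠ e v := fun h => huv (e.injective h)
  set pb : α → Prop := fun x => x ≠ v ∧ x ≠ u with hpb
  set E : Perm α := swap v (e u) * e * swap v (e u) with hE
  have hEapp : ∀ x, E x = swap v (e u) (e (swap v (e u) x)) := fun x => rfl
  have hEI : Function.Involutive E := by
    intro x
    simp [hEapp, swap_apply_self, heI (swap v (e u) x)]
  have hEF : ∀ x, E x ≠ x := by
    intro x h
    rw [hEapp] at h
    have h2 := congrArg (swap v (e u)) h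
    rw [swap_apply_self] at h2
    exact heF _ h2
  have hEmem : ∀ x y : α, E x = y ↔ x = E y := fun x y =>
    ⟨fun h => by rw [← h, hEI], fun h => by rw [h, hEI]⟩
  have hEv : E v = u := by
    rw [hEapp, swap_apply_left, heI u, swap_apply_of_ne_of_ne huv hueu]
  have hEu : E u = v := by
    rw [hEapp, swap_apply_of_ne_of_ne huv hueu, swap_apply_right]
  have hEeu : E (e u) = e v := by
    rw [hEapp, swap_apply_right, swap_apply_of_ne_of_ne hvev.symm heuev.symm]
  have hEev : E (e v) = e u := by
    rw [hEapp, swap_apply_of_ne_of_ne hvev.symm heuev.symm, heI v, swap_apply_left]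
  have hEo : ∀ x, x ≠ v → x ≠ e v → x ≠ u → x ≠ e u → E x = e x := by
    intro x h1 h2 h3 h4
    rw [hEapp, swap_apply_of_ne_of_ne h1 h4, swap_apply_of_ne_of_ne]
    · intro h; exact h2 ((hmem x v).mp h)
    · intro h; exact h3 (by rw [(hmem x (e u)).mp h, heI])
  have hpbE : ∀ x, pb x ↔ pb (E x) := by
    intro x
    have q1 : E x = v ↔ x = u := by rw [hEmem, hEv]
    have q2 : E x = u ↔ x = v := by rw [hEmem, hEu]
    constructor
    · rintro ⟨a, b⟩; exact ⟨fun h => b (q1.mp h), fun h => a (q2.mp h)⟩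
    · rintro ⟨a, b⟩; exact ⟨fun h => b (q2.mpr h), fun h => a (q1.mpr h)⟩
  have hpbm : ∀ m : Perm α, Function.Involutive m → m v = u → ∀ x, pb x ↔ pb (m x) := by
    intro m hmI hmv x
    have hmu : m u = v := by rw [← hmv]; exact hmI v
    have hmmem : ∀ a b : α, m a = b ↔ a = m b := fun a b =>
      ⟨fun h => by rw [← h, hmI], fun h => by rw [h, hmI]⟩
    have q1 : m x = v ↔ x = u := by rw [hmmem x v, hmv]
    have q2 : m x = u ↔ x = v := by rw [hmmem x u, hmu]
    constructor
    · rintro ⟨a, b⟩; exact ⟨fun h => b (q1.mp h), fun h => a (q2.mp h)⟩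
    · rintro ⟨a, b⟩; exact ⟨fun h => b (q2.mpr h), fun h => a (q1.mpr h)⟩
  have hMv : ∀ m' : Perm (Subtype pb), (swap v u * ofSubtype m') v = u := by
    intro m'
    rw [Perm.mul_apply, ofSubtype_apply_of_not_mem m' (by simp [hpb])]
    exact swap_apply_left v u
  have hMu : ∀ m' : Perm (Subtype pb), (swap v u * ofSubtype m') u = v := by
    intro m'
    rw [Perm.mul_apply, ofSubtype_apply_of_not_mem m' (by simp [hpb])]
    exact swap_apply_right v u
  have hMo : ∀ (m' : Perm (Subtype pb)) x (hx : pb x),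
      (swap v u * ofSubtype m') x = (m' ⟨x, hx⟩).1 := by
    intro m' x hx
    rw [Perm.mul_apply, ofSubtype_apply_of_mem m' hx]
    exact swap_apply_of_ne_of_ne (m' ⟨x, hx⟩).2.1 (m' ⟨x, hx⟩).2.2
  refine ⟨E.subtypePerm (fun x => (hpbE x).symm), ⟨?_, ?_⟩, ?_⟩
  · intro x
    apply Subtype.ext
    simp only [Equiv.Perm.subtypePerm_apply]
    exact hEI x.1
  · intro x h
    exact hEF x.1 (congrArg Subtype.val h)
  apply Nat.card_congr
  refine
    { toFun := fun m => ⟨m.1.subtypePerm (fun x => (hpbm m.1 m.2.1.1.1.1 m.2.1.2 x).symm), ⟨?_, ?_⟩, ?_⟩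
      invFun := fun m' => ⟨swap v u * ofSubtype m'.1, ⟨⟨⟨?_, ?_⟩, ?_⟩, hMv m'.1⟩, ?_⟩
      left_inv := ?_
      right_inv := ?_ }
  -- toFun: involutive
  · intro x
    apply Subtype.ext
    simp only [Equiv.Perm.subtypePerm_apply]
    exact m.2.1.1.1.1 x.1
  -- toFun: fixed point free
  · intro x h
    exact m.2.1.1.1.2 x.1 (congrArg Subtype.val h)
  -- toFun: deranges eb
  · rintro ⟨x, hx1, hx2⟩ hcon
    have hval : m.1 x = E x := congrArg Subtype.val hcon
    by_cases h1 : x = e u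
    · subst h1; rw [hEeu] at hval; exact m.2.2 hval
    by_cases h2 : x = e v
    · subst h2
      rw [hEev] at hval
      have h5 := congrArg m.1 hval
      rw [m.2.1.1.1.1 (e v)] at h5
      exact m.2.2 h5.symm
    · rw [hEo x hx1 h2 hx2 h1] at hval
      exact m.2.1.1.2 x hval
  -- invFun: involutive
  · intro x
    by_cases h1 : x = v
    · subst h1; rw [hMv, hMu]
    by_cases h2 : x = u
    · subst h2; rw [hMu, hMv]
    · rw [hMo m'.1 x ⟨h1, h2⟩, hMo m'.1 _ (m'.1 ⟨x, ⟨h1, h2⟩⟩).2, Subtype.coe_eta]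
      exact congrArg Subtype.val (m'.2.1.1 ⟨x, ⟨h1, h2⟩⟩)
  -- invFun: fixed point free
  · intro x h
    by_cases h1 : x = v
    · subst h1; rw [hMv] at h; exact huv h
    by_cases h2 : x = u
    · subst h2; rw [hMu] at h; exact huv h.symm
    · rw [hMo m'.1 x ⟨h1, h2⟩] at h
      exact m'.2.1.2 ⟨x, h1, h2⟩ (Subtype.ext h)
  -- invFun: deranges e
  · intro x h
    by_cases h1 : x = v
    · subst h1; rw [hMv] at h; exact huev h
    by_cases h2 : x = u
    · subst h2; rw [hMu] at h; exact heuv h.symm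
    rw [hMo m'.1 x ⟨h1, h2⟩] at h
    by_cases h3 : x = e u
    · subst h3
      rw [heI u] at h
      exact (m'.1 ⟨e u, ⟨h1, h2⟩⟩).2.2 h
    by_cases h4 : x = e v
    · subst h4
      rw [heI v] at h
      exact (m'.1 ⟨e v, ⟨h1, h2⟩⟩).2.1 h
    · exact m'.2.2 ⟨x, h1, h2⟩ (Subtype.ext (h.trans (hEo x h1 h4 h2 h3).symm))
  -- invFun: m (e u) ≠ e v
  · rw [hMo m'.1 (e u) ⟨heuv, Ne.symm hueu⟩]
    intro h
    exact m'.2.2 ⟨e u, ⟨heuv, Ne.symm hueu⟩⟩ (Subtype.ext (h.trans hEeu.symm))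
  -- left_inv
  · intro m
    apply Subtype.ext
    apply Equiv.ext
    intro x
    have hmu : m.1 u = v :=
      (congrArg m.1 m.2.1.2).symm.trans (m.2.1.1.1.1 v)
    by_cases h1 : x = v
    · rw [h1, hMv]; exact m.2.1.2.symm
    by_cases h2 : x = u
    · rw [h2, hMu]; exact hmu.symm
    · rw [hMo _ x ⟨h1, h2⟩]
      rfl
  -- right_inv
  · intro m'
    apply Subtype.ext
    apply Equiv.ext
    intro x
    apply Subtype.ext
    show (swap v u * ofSubtype m'.1) x.1 = (m'.1 x).1
    rw [hMo m'.1 x.1 x.2, Subtype.coe_eta]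




lemma caseA [Fintype α] [DecidableEq α] {e : Perm α}
    (heI : Function.Involutive e) (heF : ∀ i, e i ≠ i)
    {v u : α} (huv : u ≠ v) (huev : u ≠ e v) :
    ∃ ea : Perm {x : α // x ≠ v ∧ x ≠ u ∧ x ≠ e v ∧ x ≠ e u}, IsPMG ea ∧
      Nat.card {m : Perm α // ((IsPMG m ∧ ∀ i, m i ≠ e i) ∧ m v = u) ∧ m (e u) = e v}
        = pmc {x : α // x ≠ v ∧ x ≠ u ∧ x ≠ e v ∧ x ≠ e u} ea := by
  classical
  have hmem : ∀ x y : α, e x = y ↔ x = e y := fun x y =>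
    ⟨fun h => by rw [← h, heI], fun h => by rw [h, heI]⟩
  have hvev : v ≠ e v := Ne.symm (heF v)
  have hueu : u ≠ e u := Ne.symm (heF u)
  have heuv : e u ≠ v := fun h => huev ((hmem u v).mp h)
  have heuev : e u ≠ e v := fun h => huv (e.injective h)
  set qa : α → Prop := fun x => x ≠ v ∧ x ≠ u ∧ x ≠ e v ∧ x ≠ e u with hqa
  have hqae : ∀ x, qa x ↔ qa (e x) := by
    intro x
    have r1 : e x = v ↔ x = e v := hmem x v
    have r2 : e x = u ↔ x = e u := hmem x u
    have r3 : e x = e v ↔ x = v := e.injective.eq_iff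
    have r4 : e x = e u ↔ x = u := e.injective.eq_iff
    constructor
    · rintro ⟨a, b, c, d⟩
      exact ⟨fun h => c (r1.mp h), fun h => d (r2.mp h), fun h => a (r3.mp h),
        fun h => b (r4.mp h)⟩
    · rintro ⟨a, b, c, d⟩
      exact ⟨fun h => c (r3.mpr h), fun h => d (r4.mpr h), fun h => a (r1.mpr h),
        fun h => b (r2.mpr h)⟩
  have hqam : ∀ m : Perm α, Function.Involutive m → m v = u → m (e u) = e v →
      ∀ x, qa x ↔ qa (m x) := by
    intro m hmI hmv hmeu x
    have hmu : m u = v := (congrArg m hmv).symm.trans (hmI v)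
    have hmev : m (e v) = e u := (congrArg m hmeu).symm.trans (hmI (e u))
    have hmmem : ∀ a b : α, m a = b ↔ a = m b := fun a b =>
      ⟨fun h => by rw [← h, hmI], fun h => by rw [h, hmI]⟩
    have r1 : m x = v ↔ x = u := by rw [hmmem x v, hmv]
    have r2 : m x = u ↔ x = v := by rw [hmmem x u, hmu]
    have r3 : m x = e v ↔ x = e u := by rw [hmmem x (e v), hmev]
    have r4 : m x = e u ↔ x = e v := by rw [hmmem x (e u), hmeu]
    constructor
    · rintro ⟨a, b, c, d⟩
      exact ⟨fun h => b (r1.mp h), fun h => a (r2.mp h), fun h => d (r3.mp h),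
        fun h => c (r4.mp h)⟩
    · rintro ⟨a, b, c, d⟩
      exact ⟨fun h => b (r2.mpr h), fun h => a (r1.mpr h), fun h => d (r4.mpr h),
        fun h => c (r3.mpr h)⟩
  have hnv : ¬ qa v := by simp [hqa]
  have hnu : ¬ qa u := by simp [hqa]
  have hnev : ¬ qa (e v) := by simp [hqa]
  have hneu : ¬ qa (e u) := by simp [hqa]
  have hMv : ∀ m' : Perm (Subtype qa),
      (swap v u * swap (e v) (e u) * ofSubtype m') v = u := by
    intro m'
    rw [Perm.mul_apply, Perm.mul_apply, ofSubtype_apply_of_not_mem m' hnv,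
      swap_apply_of_ne_of_ne hvev (Ne.symm heuv), swap_apply_left]
  have hMu : ∀ m' : Perm (Subtype qa),
      (swap v u * swap (e v) (e u) * ofSubtype m') u = v := by
    intro m'
    rw [Perm.mul_apply, Perm.mul_apply, ofSubtype_apply_of_not_mem m' hnu,
      swap_apply_of_ne_of_ne huev hueu, swap_apply_right]
  have hMev : ∀ m' : Perm (Subtype qa),
      (swap v u * swap (e v) (e u) * ofSubtype m') (e v) = e u := by
    intro m'
    rw [Perm.mul_apply, Perm.mul_apply, ofSubtype_apply_of_not_mem m' hnev,
      swap_apply_left, swap_apply_of_ne_of_ne heuv (Ne.symm hueu)]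
  have hMeu : ∀ m' : Perm (Subtype qa),
      (swap v u * swap (e v) (e u) * ofSubtype m') (e u) = e v := by
    intro m'
    rw [Perm.mul_apply, Perm.mul_apply, ofSubtype_apply_of_not_mem m' hneu,
      swap_apply_right, swap_apply_of_ne_of_ne (heF v) (Ne.symm huev)]
  have hMo : ∀ (m' : Perm (Subtype qa)) x (hx : qa x),
      (swap v u * swap (e v) (e u) * ofSubtype m') x = (m' ⟨x, hx⟩).1 := by
    intro m' x hx
    rw [Perm.mul_apply, Perm.mul_apply, ofSubtype_apply_of_mem m' hx,
      swap_apply_of_ne_of_ne (m' ⟨x, hx⟩).2.2.2.1 (m' ⟨x, hx⟩).2.2.2.2,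
      swap_apply_of_ne_of_ne (m' ⟨x, hx⟩).2.1 (m' ⟨x, hx⟩).2.2.1]
  refine ⟨e.subtypePerm (fun x => (hqae x).symm), ⟨?_, ?_⟩, ?_⟩
  · intro x
    apply Subtype.ext
    simp only [Equiv.Perm.subtypePerm_apply]
    exact heI x.1
  · intro x h
    exact heF x.1 (congrArg Subtype.val h)
  apply Nat.card_congr
  refine
    { toFun := fun m =>
        ⟨m.1.subtypePerm (fun x => (hqam m.1 m.2.1.1.1.1 m.2.1.2 m.2.2 x).symm), ⟨?_, ?_⟩, ?_⟩
      invFun := fun m' =>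
        ⟨swap v u * swap (e v) (e u) * ofSubtype m'.1, ⟨⟨⟨?_, ?_⟩, ?_⟩, hMv m'.1⟩,
          hMeu m'.1⟩
      left_inv := ?_
      right_inv := ?_ }
  -- toFun: involutive
  · intro x
    apply Subtype.ext
    simp only [Equiv.Perm.subtypePerm_apply]
    exact m.2.1.1.1.1 x.1
  -- toFun: fixed point free
  · intro x h
    exact m.2.1.1.1.2 x.1 (congrArg Subtype.val h)
  -- toFun: deranges ea
  · intro x hcon
    exact m.2.1.1.2 x.1 (congrArg Subtype.val hcon)
  -- invFun: involutive
  · intro x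
    by_cases h1 : x = v
    · rw [h1, hMv, hMu]
    by_cases h2 : x = u
    · rw [h2, hMu, hMv]
    by_cases h3 : x = e v
    · rw [h3, hMev, hMeu]
    by_cases h4 : x = e u
    · rw [h4, hMeu, hMev]
    · rw [hMo m'.1 x ⟨h1, h2, h3, h4⟩,
        hMo m'.1 _ (m'.1 ⟨x, ⟨h1, h2, h3, h4⟩⟩).2, Subtype.coe_eta]
      exact congrArg Subtype.val (m'.2.1.1 ⟨x, ⟨h1, h2, h3, h4⟩⟩)
  -- invFun: fixed point free
  · intro x h
    by_cases h1 : x = v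
    · rw [h1, hMv] at h; exact huv h
    by_cases h2 : x = u
    · rw [h2, hMu] at h; exact huv h.symm
    by_cases h3 : x = e v
    · rw [h3, hMev] at h; exact heuev h
    by_cases h4 : x = e u
    · rw [h4, hMeu] at h; exact heuev h.symm
    · rw [hMo m'.1 x ⟨h1, h2, h3, h4⟩] at h
      exact m'.2.1.2 ⟨x, h1, h2, h3, h4⟩ (Subtype.ext h)
  -- invFun: deranges e
  · intro x h
    by_cases h1 : x = v
    · rw [h1, hMv] at h; exact huev h
    by_cases h2 : x = u
    · rw [h2, hMu] at h; exact heuv h.symm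
    by_cases h3 : x = e v
    · rw [h3, hMev, heI v] at h; exact heuv h
    by_cases h4 : x = e u
    · rw [h4, hMeu, heI u] at h; exact huev h.symm
    · rw [hMo m'.1 x ⟨h1, h2, h3, h4⟩] at h
      exact m'.2.2 ⟨x, h1, h2, h3, h4⟩ (Subtype.ext h)
  -- left_inv
  · intro m
    apply Subtype.ext
    apply Equiv.ext
    intro x
    have hmI : Function.Involutive m.1 := m.2.1.1.1.1
    have hmv : m.1 v = u := m.2.1.2
    have hmeu : m.1 (e u) = e v := m.2.2
    have hmu : m.1 u = v := (congrArg m.1 hmv).symm.trans (hmI v)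
    have hmev : m.1 (e v) = e u := (congrArg m.1 hmeu).symm.trans (hmI (e u))
    by_cases h1 : x = v
    · rw [h1, hMv]; exact hmv.symm
    by_cases h2 : x = u
    · rw [h2, hMu]; exact hmu.symm
    by_cases h3 : x = e v
    · rw [h3, hMev]; exact hmev.symm
    by_cases h4 : x = e u
    · rw [h4, hMeu]; exact hmeu.symm
    · rw [hMo _ x ⟨h1, h2, h3, h4⟩]
      rfl
  -- right_inv
  · intro m'
    apply Subtype.ext
    apply Equiv.ext
    intro x
    apply Subtype.ext
    show (swap v u * swap (e v) (e u) * ofSubtype m'.1) x.1 = (m'.1 x).1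
    rw [hMo m'.1 x.1 x.2, Subtype.coe_eta]


section Main

variable {α : Type*}

lemma fiber_card [Fintype α] [DecidableEq α] {e : Perm α} (he : IsPMG e)
    {v u : α} (huv : u ≠ v) (huev : u ≠ e v)
    {β₁ β₂ : Type*} [Fintype β₁] [DecidableEq β₁] [Fintype β₂] [DecidableEq β₂]
    (hb₁ : Fintype.card β₁ + 2 = Fintype.card α)
    (hb₂ : Fintype.card β₂ + 4 = Fintype.card α)
    {e₁ : Perm β₁} {e₂ : Perm β₂} (he₁ : IsPMG e₁) (he₂ : IsPMG e₂) :
    Nat.card {m : Perm α // (IsPMG m ∧ ∀ i, m i ≠ e i) ∧ m v = u}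
      = pmc β₁ e₁ + pmc β₂ e₂ := by
  classical
  obtain ⟨heI, heF⟩ := he
  have hmem : ∀ x y : α, e x = y ↔ x = e y := fun x y =>
    ⟨fun h => by rw [← h, heI], fun h => by rw [h, heI]⟩
  have hvev : v ≠ e v := Ne.symm (heF v)
  have heuv : e u ≠ v := fun h => huev ((hmem u v).mp h)
  have heuev : e u ≠ e v := fun h => huv (e.injective h)
  obtain ⟨ea, heaPM, hA⟩ := caseA heI heF huv huev
  obtain ⟨eb, hebPM, hB⟩ := caseB heI heF huv huev
  have hsplit : Nat.card {m : Perm α // (IsPMG m ∧ ∀ i, m i ≠ e i) ∧ m v = u}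
      = Nat.card {m : Perm α // ((IsPMG m ∧ ∀ i, m i ≠ e i) ∧ m v = u) ∧ m (e u) = e v}
        + Nat.card {m : Perm α // ((IsPMG m ∧ ∀ i, m i ≠ e i) ∧ m v = u) ∧ ¬ m (e u) = e v} := by
    rw [Nat.card_congr (splitE (fun m : Perm α => (IsPMG m ∧ ∀ i, m i ≠ e i) ∧ m v = u)
        (fun m => m (e u) = e v)), Nat.card_sum]
  have c1 : Fintype.card {x : α // x ≠ v ∧ x ≠ u} = Fintype.card β₁ := by
    have := card_ne2 (α := α) huv; omega
  have c2 : Fintype.card {x : α // x ≠ v ∧ x ≠ u ∧ x ≠ e v ∧ x ≠ e u}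
      = Fintype.card β₂ := by
    have := card_ne4 (α := α) huv (heF v) (Ne.symm huev) heuv (heF u) heuev
    omega
  rw [hsplit, hA, hB, pmc_eq_pmc c2 heaPM he₂, pmc_eq_pmc c1 hebPM he₁]
  omega

end Main

lemma DM_eq_pmc (k : ℕ) (e : Equiv.Perm (Fin (2*k))) : DM k e = pmc (Fin (2*k)) e := rfl

/-- The number of perfect matchings of `K_{2n}` deranging a fixed perfect matching
satisfies `D^M_0 = 1`, `D^M_1 = 0` and `D^M_n = 2(n-1)(D^M_{n-1} + D^M_{n-2})`. -/
theorem matching_derangement_recurrence :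
    (∀ e : Equiv.Perm (Fin (2 * 0)), DM 0 e = 1) ∧
    (∀ e : Equiv.Perm (Fin (2 * 1)), IsPM e → DM 1 e = 0) ∧
    (∀ n : ℕ, 2 ≤ n →
      ∀ (e : Equiv.Perm (Fin (2 * n))) (e₁ : Equiv.Perm (Fin (2 * (n - 1))))
        (e₂ : Equiv.Perm (Fin (2 * (n - 2)))),
        IsPM e → IsPM e₁ → IsPM e₂ →
        DM n e = 2 * (n - 1) * (DM (n - 1) e₁ + DM (n - 2) e₂)) := by
  refine ⟨?_, ?_, ?_⟩
  · intro e
    have h1 : Nonempty {m : Equiv.Perm (Fin (2*0)) // IsPM m ∧ ∀ i, m i ≠ e i} :=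
      ⟨⟨1, ⟨fun x => rfl, fun i => i.elim0⟩, fun i => i.elim0⟩⟩
    have h2 : Subsingleton {m : Equiv.Perm (Fin (2*0)) // IsPM m ∧ ∀ i, m i ≠ e i} := by
      constructor
      intro a b
      apply Subtype.ext
      apply Equiv.ext
      intro i
      exact i.elim0
    exact Nat.card_eq_one_iff_unique.mpr ⟨h2, h1⟩
  · intro e he
    have hempty : IsEmpty {m : Equiv.Perm (Fin (2*1)) // IsPM m ∧ ∀ i, m i ≠ e i} := by
      constructor
      rintro ⟨m, ⟨hmI, hmF⟩, hd⟩
      have key : ∀ x : Fin (2*1), x ≠ 0 → x = 1 := by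
        intro x hx
        have h1 := x.isLt
        have h2 : x.1 ≠ 0 := fun h => hx (Fin.ext h)
        apply Fin.ext
        simp only [Fin.val_one]
        omega
      have hm0 : m 0 = 1 := key _ (hmF 0)
      have he0 : e 0 = 1 := key _ (he.2 0)
      exact hd 0 (hm0.trans he0.symm)
    exact Nat.card_of_isEmpty
  · intro n hn e e₁ e₂ he he₁ he₂
    classical
    have hne : (0:ℕ) < 2*n := by omega
    set v : Fin (2*n) := ⟨0, hne⟩ with hv
    have heG : IsPMG e := he
    have hsig : Nat.card {m : Equiv.Perm (Fin (2*n)) // IsPMG m ∧ ∀ i, m i ≠ e i}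
        = ∑ u : {u : Fin (2*n) // u ≠ v ∧ u ≠ e v},
            Nat.card {m : Equiv.Perm (Fin (2*n)) //
              (IsPMG m ∧ ∀ i, m i ≠ e i) ∧ m v = u.1} := by
      rw [← natCard_sigma]
      apply Nat.card_congr
      exact
        { toFun := fun m => ⟨⟨m.1 v, m.2.1.2 v, m.2.2 v⟩, ⟨m.1, m.2, rfl⟩⟩
          invFun := fun x => ⟨x.2.1, x.2.2.1⟩
          left_inv := fun m => rfl
          right_inv := by
            rintro ⟨⟨uval, hu⟩, m, hm, hmv⟩
            refine Sigma.ext (Subtype.ext hmv) ?_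
            refine (Subtype.heq_iff_coe_eq ?_).mpr rfl
            intro x
            have hmv' : m v = uval := hmv
            change (IsPMG x ∧ ∀ i, x i ≠ e i) ∧ x v = m v
              ↔ (IsPMG x ∧ ∀ i, x i ≠ e i) ∧ x v = uval
            rw [hmv'] }
    have hfib : ∀ u : {u : Fin (2*n) // u ≠ v ∧ u ≠ e v},
        Nat.card {m : Equiv.Perm (Fin (2*n)) //
            (IsPMG m ∧ ∀ i, m i ≠ e i) ∧ m v = u.1}
          = DM (n-1) e₁ + DM (n-2) e₂ := by
      intro u
      rw [DM_eq_pmc, DM_eq_pmc]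
      exact fiber_card heG u.2.1 u.2.2
        (by simp only [Fintype.card_fin]; omega)
        (by simp only [Fintype.card_fin]; omega) he₁ he₂
    have hcard : Fintype.card {u : Fin (2*n) // u ≠ v ∧ u ≠ e v} = 2*n - 2 := by
      have h1 := card_ne2 (v := v) (u := e v) (he.2 v)
      rw [Fintype.card_fin] at h1
      omega
    have hmain : DM n e
        = Nat.card {m : Equiv.Perm (Fin (2*n)) // IsPMG m ∧ ∀ i, m i ≠ e i} := rfl
    rw [hmain, hsig]
    have hsum : ∑ u : {u : Fin (2*n) // u ≠ v ∧ u ≠ e v},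
        Nat.card {m : Equiv.Perm (Fin (2*n)) //
            (IsPMG m ∧ ∀ i, m i ≠ e i) ∧ m v = u.1}
        = ∑ _u : {u : Fin (2*n) // u ≠ v ∧ u ≠ e v}, (DM (n-1) e₁ + DM (n-2) e₂) :=
      Finset.sum_congr rfl (fun u _ => hfib u)
    rw [hsum, Finset.sum_const, Finset.card_univ, hcard, smul_eq_mul]
    have h22 : 2*n - 2 = 2*(n-1) := by omega
    rw [h22]
end

section
/- The chromatic number of the matching derangement graph on perfect matchings of K_{2n} equals 2n-1. -/
/-- The set of perfect matchings of `K_{2n}`. -/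
abbrev PMV (n : ℕ) := {f : Equiv.Perm (Fin (2 * n)) // IsPM f}

/-- The matching derangement graph: vertices are the perfect matchings of `K_{2n}`,
two matchings being adjacent iff they share no edge. -/
def MDG (n : ℕ) : SimpleGraph (PMV n) where
  Adj m m' := m ≠ m' ∧ ∀ i, m.1 i ≠ m'.1 i
  symm := by
    refine ⟨?_⟩
    intro m m' h
    exact ⟨h.1.symm, fun i => (h.2 i).symm⟩
  loopless := ⟨fun m h => h.1 rfl⟩

section clique

variable (n : ℕ)

/-- the round-robin involution on `Option (ZMod (2*n-1))` with round `r`. -/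
def sigmaFun (r : ZMod (2 * n - 1)) : Option (ZMod (2 * n - 1)) → Option (ZMod (2 * n - 1))
  | none => some r
  | some i => if i = r then none else some (2 * r - i)

lemma two_mul_eq_zero (hn : 1 ≤ n) {d : ZMod (2 * n - 1)} (h : 2 * d = 0) : d = 0 := by
  have h1 : ((2 * n : ℕ) : ZMod (2 * n - 1)) = 1 := by
    have : (2 * n : ℕ) = (2 * n - 1) + 1 := by omega
    rw [this]
    push_cast [ZMod.natCast_self]
    ring
  have : d = ((2 * n : ℕ) : ZMod (2 * n - 1)) * d := by rw [h1, one_mul]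
  rw [this]
  push_cast
  calc (2 : ZMod (2*n-1)) * n * d = n * (2 * d) := by ring
  _ = 0 := by rw [h, mul_zero]

lemma sigma_invol (r : ZMod (2 * n - 1)) : Function.Involutive (sigmaFun n r) := by
  intro x
  match x with
  | none => simp [sigmaFun]
  | some i =>
    by_cases h : i = r
    · simp [sigmaFun, h]
    · have h2 : ¬ (2 * r - i = r) := by
        intro he
        exact h (by linear_combination -he)
      simp only [sigmaFun, if_neg h, if_neg h2]
      congr 1
      ring

def sigmaPerm (r : ZMod (2 * n - 1)) : Equiv.Perm (Option (ZMod (2 * n - 1))) :=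
  (sigma_invol n r).toPerm

noncomputable def myEquiv (hn : 1 ≤ n) : Fin (2 * n) ≃ Option (ZMod (2 * n - 1)) := by
  haveI : NeZero (2 * n - 1) := ⟨by omega⟩
  apply Fintype.equivOfCardEq
  simp [ZMod.card]
  omega

noncomputable def roundPerm (hn : 1 ≤ n) (r : ZMod (2 * n - 1)) : Equiv.Perm (Fin (2 * n)) :=
  ((myEquiv n hn).trans (sigmaPerm n r)).trans (myEquiv n hn).symm

lemma roundPerm_isPM (hn : 1 ≤ n) (r : ZMod (2 * n - 1)) : IsPM (roundPerm n hn r) := by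
  constructor
  · intro x
    simp [roundPerm, sigmaPerm, sigma_invol n r _]
  · intro i
    simp only [roundPerm, Equiv.trans_apply]
    intro h
    have h2 : sigmaPerm n r ((myEquiv n hn) i) = (myEquiv n hn) i := by
      have := congrArg (myEquiv n hn) h
      simpa using this
    revert h2
    generalize (myEquiv n hn) i = x
    match x with
    | none => simp [sigmaPerm, Function.Involutive.toPerm, sigmaFun]
    | some j =>
      simp only [sigmaPerm, Function.Involutive.toPerm, Equiv.coe_fn_mk, sigmaFun]
      by_cases h : j = r
      · simp [h]
      · simp only [if_neg h]
        intro he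
        apply h
        have : 2 * (r - j) = 0 := by
          have := Option.some.inj he
          linear_combination this
        have := two_mul_eq_zero n hn this
        linear_combination -this

lemma roundPerm_disj (hn : 1 ≤ n) {r s : ZMod (2 * n - 1)} (hrs : r ≠ s) (i : Fin (2 * n)) :
    roundPerm n hn r i ≠ roundPerm n hn s i := by
  simp only [roundPerm, Equiv.trans_apply, ne_eq, EmbeddingLike.apply_eq_iff_eq]
  generalize (myEquiv n hn) i = x
  match x with
  | none =>
    simp only [sigmaPerm, Function.Involutive.toPerm, Equiv.coe_fn_mk, sigmaFun]
    exact fun h => hrs (Option.some.inj h)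
  | some j =>
    simp only [sigmaPerm, Function.Involutive.toPerm, Equiv.coe_fn_mk, sigmaFun]
    by_cases h1 : j = r
    · rw [if_pos h1, if_neg (by rw [h1]; exact hrs)]
      simp
    · rw [if_neg h1]
      by_cases h2 : j = s
      · rw [if_pos h2]; simp
      · rw [if_neg h2]
        intro he
        apply hrs
        have : 2 * (r - s) = 0 := by linear_combination Option.some.inj he
        have := two_mul_eq_zero n hn this
        linear_combination this

end clique


/-- The chromatic number of the matching derangement graph on the perfect matchings
of `K_{2n}` equals `2n - 1`. -/
theorem chromaticNumber_MDG (n : ℕ) (hn : 1 ≤ n) :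
    (MDG n).chromaticNumber = (2 * n - 1 : ℕ) := by
  have hNZ : NeZero (2 * n - 1) := ⟨by omega⟩
  apply le_antisymm
  · -- upper bound: color by partner of vertex 0
    rw [SimpleGraph.chromaticNumber_le_iff_colorable]
    refine ⟨SimpleGraph.Coloring.mk
      (fun m => (⟨(m.1 ⟨0, by omega⟩).val - 1, by
        have := (m.1 ⟨0, by omega⟩).isLt; omega⟩ : Fin (2 * n - 1))) ?_⟩
    intro m m' hadj
    have h1 := hadj.2 ⟨0, by omega⟩
    have hm : (m.1 ⟨0, by omega⟩).val ≠ 0 := by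
      intro h
      exact m.2.2 ⟨0, by omega⟩ (Fin.ext h)
    have hm' : (m'.1 ⟨0, by omega⟩).val ≠ 0 := by
      intro h
      exact m'.2.2 ⟨0, by omega⟩ (Fin.ext h)
    intro h
    apply h1
    apply Fin.ext
    have := congrArg Fin.val h
    simp at this
    omega
  · -- lower bound: clique from 1-factorization
    classical
    have key : ∀ r s : ZMod (2*n-1), r ≠ s →
        (MDG n).Adj ⟨roundPerm n hn r, roundPerm_isPM n hn r⟩
          ⟨roundPerm n hn s, roundPerm_isPM n hn s⟩ := by
      intro r s hrs
      refine ⟨?_, fun i => roundPerm_disj n hn hrs i⟩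
      intro h
      exact roundPerm_disj n hn hrs ⟨0, by omega⟩ (by rw [Subtype.mk.injEq] at h; rw [h])
    set f : ZMod (2*n-1) → PMV n := fun r => ⟨roundPerm n hn r, roundPerm_isPM n hn r⟩ with hf
    have hinj : Function.Injective f := by
      intro r s h
      by_contra hrs
      exact (key r s hrs).1 h
    have hclique : (MDG n).IsClique (Finset.image f Finset.univ : Finset (PMV n)) := by
      intro a ha b hb hab
      simp only [Finset.coe_image, Finset.coe_univ, Set.image_univ, Set.mem_range] at ha hb
      obtain ⟨r, rfl⟩ := ha
      obtain ⟨s, rfl⟩ := hb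
      exact key r s (fun h => hab (by rw [h]))
    have := hclique.card_le_chromaticNumber
    rwa [Finset.card_image_of_injective _ hinj, Finset.card_univ, ZMod.card] at this
end

section
/- If F is an intersecting family of perfect matchings of K_{2n}, then |F| ≤ (2n-3)!!. -/
open scoped Nat

open Finset Equiv

/-- General version of `IsPM` for permutations of an arbitrary type. -/
def IsPMg {α : Type*} (f : Equiv.Perm α) : Prop := Function.Involutive f ∧ ∀ i, f i ≠ i

instance {α : Type*} [Fintype α] [DecidableEq α] : DecidablePred (IsPMg (α := α)) :=
  fun _ => by unfold IsPMg Function.Involutive; infer_instance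

section Gen
variable {α : Type*} [Fintype α] [DecidableEq α]

omit [Fintype α] [DecidableEq α] in
lemma isPMg_conj {f : Perm α} (hf : IsPMg f) (g : Perm α) : IsPMg (g * f * g⁻¹) := by
  obtain ⟨h1, h2⟩ := hf
  constructor
  · intro x
    simp [Equiv.Perm.mul_apply, h1 _]
  · intro x hx
    simp only [Equiv.Perm.mul_apply] at hx
    have hfx : f (g⁻¹ x) = g⁻¹ x := g.injective (show g (f (g⁻¹ x)) = g (g⁻¹ x) by simpa using hx)
    exact h2 _ hfx

omit [Fintype α] [DecidableEq α] in
lemma mulself_of_isPMg {f : Perm α} (hf : IsPMg f) : f * f = 1 := by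
  ext x; simp [Equiv.Perm.mul_apply, hf.1 x]

lemma cycleType_of_isPMg {f : Perm α} (hf : IsPMg f) :
    f.cycleType = Multiset.replicate (Fintype.card α / 2) 2 := by
  have hord : orderOf f ∣ 2 := orderOf_dvd_of_pow_eq_one (by rw [pow_two]; exact mulself_of_isPMg hf)
  have hmem : ∀ r ∈ f.cycleType, r = 2 := by
    intro r hr
    have h1 : 2 ≤ r := Equiv.Perm.two_le_of_mem_cycleType hr
    have h2 : r ∣ 2 := dvd_trans (Multiset.dvd_lcm hr) (by rw [Equiv.Perm.lcm_cycleType]; exact hord)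
    have := Nat.le_of_dvd (by norm_num) h2
    omega
  have hsupp : f.support = Finset.univ := by
    ext x; simp [Equiv.Perm.mem_support, hf.2 x]
  have hsum : f.cycleType.sum = Fintype.card α := by
    rw [Equiv.Perm.sum_cycleType, hsupp, Finset.card_univ]
  have hrep : f.cycleType = Multiset.replicate (Multiset.card f.cycleType) 2 :=
    Multiset.eq_replicate.mpr ⟨rfl, hmem⟩
  have hcard : 2 * Multiset.card f.cycleType = Fintype.card α := by
    conv_rhs => rw [← hsum]
    rw [hrep]
    simp [Multiset.sum_replicate, mul_comm]
  rw [hrep]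
  congr 1
  omega

lemma conj_exists_of_isPMg {f f' : Perm α} (hf : IsPMg f) (hf' : IsPMg f') :
    ∃ h : Perm α, h * f * h⁻¹ = f' :=
  isConj_iff.mp (Equiv.Perm.isConj_iff_cycleType_eq.mpr
    (by rw [cycleType_of_isPMg hf, cycleType_of_isPMg hf']))

lemma fiber_card_mul {M₀ f : Perm α} (hM₀ : IsPMg M₀) (hf : IsPMg f) :
    (Finset.univ.filter fun g : Perm α => g * M₀ * g⁻¹ = f).card
      * (Finset.univ.filter (fun f : Perm α => IsPMg f)).card = (Fintype.card α)! := by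
  set P := Finset.univ.filter (fun f : Perm α => IsPMg f) with hP
  have h1 : (Finset.univ : Finset (Perm α)).card
      = ∑ b ∈ P, (Finset.univ.filter fun g : Perm α => g * M₀ * g⁻¹ = b).card := by
    apply Finset.card_eq_sum_card_fiberwise
    intro g _
    simp only [hP, Finset.mem_filter]
    exact (Finset.mem_filter.mpr ⟨Finset.mem_univ _, isPMg_conj hM₀ g⟩ :
      g * M₀ * g⁻¹ ∈ Finset.univ.filter (fun f : Perm α => IsPMg f))
  have h2 : ∀ b ∈ P, (Finset.univ.filter fun g : Perm α => g * M₀ * g⁻¹ = b).card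
      = (Finset.univ.filter fun g : Perm α => g * M₀ * g⁻¹ = f).card := by
    intro b hb
    simp only [hP, Finset.mem_filter] at hb
    obtain ⟨h, hh⟩ := conj_exists_of_isPMg hb.2 hf
    apply Finset.card_bij' (fun g _ => h * g) (fun g _ => h⁻¹ * g)
    · intro g hg
      simp only [Finset.mem_filter, Finset.mem_univ, true_and] at hg ⊢
      rw [← hh, ← hg]
      group
    · intro g hg
      simp only [Finset.mem_filter, Finset.mem_univ, true_and] at hg ⊢
      have hb' : b = h⁻¹ * f * h := by rw [← hh]; group
      rw [hb', ← hg]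
      group
    · intro g _; group
    · intro g _; group
  rw [Finset.sum_congr rfl h2, Finset.sum_const, smul_eq_mul] at h1
  rw [Finset.card_univ, Fintype.card_perm] at h1
  rw [mul_comm]
  exact h1.symm

end Gen

lemma pm_count : ∀ (m : ℕ) (α : Type) [Fintype α] [DecidableEq α], Fintype.card α = m →
    (Finset.univ.filter (fun f : Perm α => IsPMg f)).card ≤ (m - 1)‼ := by
  intro m
  induction m using Nat.strong_induction_on with
  | _ m ih =>
    intro α _ _ hcard
    classical
    rcases Nat.lt_or_ge m 2 with hm | hm
    · have h1 : (Finset.univ : Finset (Perm α)).card ≤ 1 := by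
        rw [Finset.card_univ, Fintype.card_perm, hcard]
        interval_cases m <;> decide
      have h2 : (1 : ℕ) ≤ (m-1)‼ := Nat.doubleFactorial_pos _
      exact le_trans (le_trans (Finset.card_le_card (Finset.filter_subset _ _)) h1) h2
    · obtain ⟨a⟩ : Nonempty α := by
        rw [← Fintype.card_pos_iff]; omega
      set S := Finset.univ.filter (fun f : Perm α => IsPMg f) with hS
      have hmaps : ∀ f ∈ S, f a ∈ Finset.univ.erase a := by
        intro f hf
        simp only [hS, Finset.mem_filter] at hf
        exact Finset.mem_erase.mpr ⟨hf.2.2 a, Finset.mem_univ _⟩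
      rw [Finset.card_eq_sum_card_fiberwise hmaps]
      have hfib : ∀ b ∈ Finset.univ.erase a,
          (S.filter (fun f => f a = b)).card ≤ (m - 3)‼ := by
        intro b hb
        have hab : b ≠ a := (Finset.mem_erase.mp hb).1
        set p : α → Prop := fun x => x ≠ a ∧ x ≠ b with hp
        have hcards : Fintype.card {x // p x} = m - 2 := by
          rw [Fintype.card_subtype]
          have : Finset.univ.filter p = Finset.univ \ {a, b} := by
            ext x; simp [hp, and_comm]
          rw [this, Finset.card_sdiff_of_subset (by simp), Finset.card_univ, hcard]
          rw [Finset.card_insert_of_notMem (by simp [hab.symm]), Finset.card_singleton]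
        have key : ∀ f ∈ S.filter (fun f => f a = b), ∀ x, p x ↔ p (f x) := by
          intro f hf x
          simp only [Finset.mem_filter, hS] at hf
          obtain ⟨⟨-, hinv, hfpf⟩, hfa⟩ := hf
          have hfb : f b = a := by rw [← hfa]; exact hinv a
          constructor
          · rintro ⟨hx1, hx2⟩
            constructor
            · intro h; apply hx2; rw [← hfb] at h; exact f.injective h
            · intro h; apply hx1; rw [← hfa] at h; exact f.injective h
          · rintro ⟨hx1, hx2⟩
            constructor
            · intro h; subst h; rw [hfa] at hx2; exact hx2 rfl
            · intro h; subst h; rw [hfb] at hx1; exact hx1 rfl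
        have hinj : ∀ f ∈ S.filter (fun f => f a = b), ∀ g ∈ S.filter (fun f => f a = b),
            (∀ x (_ : p x), f x = g x) → f = g := by
          intro f hf g hg heq
          simp only [Finset.mem_filter, hS] at hf hg
          obtain ⟨⟨-, hfinv, -⟩, hfa⟩ := hf
          obtain ⟨⟨-, hginv, -⟩, hga⟩ := hg
          ext x
          by_cases hxa : x = a
          · subst hxa; rw [hfa, hga]
          by_cases hxb : x = b
          · rw [hxb]
            have h1 : f b = a := by rw [← hfa]; exact hfinv a
            have h2 : g b = a := by rw [← hga]; exact hginv a
            rw [h1, h2]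
          · exact heq x ⟨hxa, hxb⟩
        have hle : (S.filter (fun f => f a = b)).card ≤
            (Finset.univ.filter (fun f : Perm {x // p x} => IsPMg f)).card := by
          apply Finset.card_le_card_of_injOn
            (fun f => if h : f ∈ S.filter (fun f => f a = b) then f.subtypePerm (fun x => (key f h x).symm) else 1)
          · intro f hf
            rw [Finset.mem_coe] at hf
            rw [Finset.mem_coe, Finset.mem_filter]
            refine ⟨Finset.mem_univ _, ?_⟩
            beta_reduce
            rw [dif_pos hf]
            have hf' := hf
            simp only [Finset.mem_filter, hS] at hf'
            obtain ⟨⟨-, hinv, hfpf⟩, -⟩ := hf'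
            constructor
            · intro x
              apply Subtype.ext
              simp only [Equiv.Perm.subtypePerm_apply]
              exact hinv x.1
            · intro x hx
              apply hfpf x.1
              have := congrArg Subtype.val hx
              simpa [Equiv.Perm.subtypePerm_apply] using this
          · intro f hf g hg heq
            simp only [Finset.mem_coe] at hf hg
            simp only [dif_pos hf, dif_pos hg] at heq
            apply hinj f hf g hg
            intro x hx
            have := congrArg (fun (σ : Perm {x // p x}) => (σ ⟨x, hx⟩ : α)) heq
            simpa [Equiv.Perm.subtypePerm_apply] using this
        calc (S.filter (fun f => f a = b)).card
            ≤ (Finset.univ.filter (fun f : Perm {x // p x} => IsPMg f)).card := hle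
          _ ≤ (m - 2 - 1)‼ := ih (m-2) (by omega) _ hcards
          _ = (m - 3)‼ := by have h : m - 2 - 1 = m - 3 := by omega
                             rw [h]
      calc ∑ b ∈ Finset.univ.erase a, (S.filter (fun f => f a = b)).card
          ≤ ∑ b ∈ Finset.univ.erase a, (m - 3)‼ := Finset.sum_le_sum hfib
        _ = (m - 1) * (m - 3)‼ := by
            rw [Finset.sum_const, smul_eq_mul, Finset.card_erase_of_mem (Finset.mem_univ a),
              Finset.card_univ, hcard]
        _ ≤ (m - 1)‼ := by
            rcases Nat.lt_or_ge m 3 with h3 | h3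
            · interval_cases m <;> decide
            · obtain ⟨k, rfl⟩ : ∃ k, m = k + 3 := ⟨m - 3, by omega⟩
              have e1 : k + 3 - 1 = k + 2 := by omega
              have e2 : k + 3 - 3 = k := by omega
              rw [e1, e2, Nat.doubleFactorial_add_two]

lemma exists_factorization (n : ℕ) (hn : 1 ≤ n) :
    ∃ Φ : Finset (Perm (Fin (2*n))),
      Φ.card = 2*n - 1 ∧ (∀ M ∈ Φ, IsPMg M) ∧
      (∀ M ∈ Φ, ∀ M' ∈ Φ, M ≠ M' → ∀ i, M i ≠ M' i) := by
  classical
  set m := 2*n - 1 with hm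
  haveI : NeZero m := ⟨by omega⟩
  have h2 : IsUnit (2 : ZMod m) := by
    have := (ZMod.isUnit_iff_coprime 2 m).mpr (Nat.coprime_two_left.mpr (Nat.odd_iff.mpr (by omega)))
    simpa using this
  have hcancel : ∀ k l : ZMod m, 2*k = 2*l → k = l := fun k l h => h2.mul_left_cancel h
  set μ : ZMod m → Option (ZMod m) → Option (ZMod m) :=
    fun k x => match x with
      | none => some k
      | some i => if i = k then none else some (2*k - i) with hμ
  have hsub : ∀ k i : ZMod m, 2*k - i = k → i = k := by
    intro k i h
    apply hcancel
    linear_combination (-2 : ZMod m) * h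
  have hinv : ∀ k, Function.Involutive (μ k) := by
    intro k x
    match x with
    | none => simp [hμ]
    | some i =>
      by_cases hik : i = k
      · simp [hμ, hik]
      · have hne : 2*k - i ≠ k := fun h => hik (hsub k i h)
        simp only [hμ, if_neg hik]
        simp only [if_neg hne]
        congr 1
        ring
  set ν : ZMod m → Perm (Option (ZMod m)) := fun k => (hinv k).toPerm with hν
  have hνapp : ∀ k x, ν k x = μ k x := fun k x => rfl
  have hpm : ∀ k, IsPMg (ν k) := by
    intro k
    refine ⟨hinv k, ?_⟩
    intro x hx
    rw [hνapp] at hx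
    match x with
    | none => simp [hμ] at hx
    | some i =>
      by_cases hik : i = k
      · simp [hμ, hik] at hx
      · simp only [hμ, if_neg hik, Option.some.injEq] at hx
        apply hik
        apply hcancel
        linear_combination -hx
  have hdisj : ∀ k l : ZMod m, k ≠ l → ∀ x, ν k x ≠ ν l x := by
    intro k l hkl x
    rw [hνapp, hνapp]
    match x with
    | none => simp [hμ, hkl]
    | some i =>
      by_cases hik : i = k
      · have hil : ¬ i = l := by rw [hik]; exact hkl
        simp [hμ, hik, hil, hkl]
      · by_cases hil : i = l
        · subst hil
          simp [hμ, hik]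
        · simp only [hμ, if_neg hik, if_neg hil, ne_eq, Option.some.injEq]
          intro h
          apply hkl
          apply hcancel
          linear_combination h
  have hνinj : Function.Injective ν := by
    intro k l h
    have := congrArg (fun σ : Perm (Option (ZMod m)) => σ none) h
    simpa [hνapp, hμ] using this
  have hcards : Fintype.card (Option (ZMod m)) = Fintype.card (Fin (2*n)) := by
    simp [ZMod.card]
    omega
  set e : Option (ZMod m) ≃ Fin (2*n) := Fintype.equivOfCardEq hcards with he
  refine ⟨(Finset.univ : Finset (ZMod m)).image (fun k => e.permCongr (ν k)), ?_, ?_, ?_⟩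
  · rw [Finset.card_image_of_injective _ (fun k l h => hνinj (e.permCongr.injective h)),
      Finset.card_univ, ZMod.card]
  · intro M hM
    obtain ⟨k, -, rfl⟩ := Finset.mem_image.mp hM
    constructor
    · intro x
      simp only [Equiv.permCongr_apply, Equiv.symm_apply_apply]
      rw [(hpm k).1 (e.symm x), Equiv.apply_symm_apply]
    · intro x hx
      simp only [Equiv.permCongr_apply] at hx
      apply (hpm k).2 (e.symm x)
      rw [← Equiv.symm_apply_apply e (ν k (e.symm x)), hx]
  · intro M hM M' hM' hne i
    obtain ⟨k, -, rfl⟩ := Finset.mem_image.mp hM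
    obtain ⟨l, -, rfl⟩ := Finset.mem_image.mp hM'
    have hkl : k ≠ l := fun h => hne (by rw [h])
    simp only [Equiv.permCongr_apply, ne_eq, EmbeddingLike.apply_eq_iff_eq]
    exact hdisj k l hkl (e.symm i)

/-- Erdős–Ko–Rado bound for perfect matchings: an intersecting family of perfect
matchings of `K_{2n}` (any two members share an edge) has size at most `(2(n-1)-1)!!`. -/
theorem EKR_matchings_bound (n : ℕ) (F : Finset (PMV n))
    (hF : ∀ m ∈ F, ∀ m' ∈ F, ∃ i, m.1 i = m'.1 i) :
    F.card ≤ (2 * (n - 1) - 1)‼ := by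
  classical
  rcases Nat.eq_zero_or_pos n with rfl | hn
  · -- n = 0 : there is only one permutation of `Fin 0`
    have : F.card ≤ 1 := by
      apply Finset.card_le_one.mpr
      intro a ha b hb
      apply Subtype.ext
      ext x
      exact x.elim0
    simpa using this
  -- main case
  set α := Fin (2*n)
  set F' : Finset (Perm α) := F.image Subtype.val with hF'
  have hF'card : F'.card = F.card := Finset.card_image_of_injective _ Subtype.val_injective
  have hF'pm : ∀ f ∈ F', IsPMg f := by
    intro f hf
    obtain ⟨m, -, rfl⟩ := Finset.mem_image.mp hf
    exact m.2
  have hF'int : ∀ f ∈ F', ∀ f' ∈ F', ∃ i, f i = f' i := by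
    intro f hf f' hf'
    obtain ⟨m, hm, rfl⟩ := Finset.mem_image.mp hf
    obtain ⟨m', hm', rfl⟩ := Finset.mem_image.mp hf'
    exact hF m hm m' hm'
  obtain ⟨Φ, hΦcard, hΦpm, hΦdisj⟩ := exists_factorization n hn
  set A : Perm α → Finset (Perm α) :=
    fun M => Finset.univ.filter (fun g => g * M * g⁻¹ ∈ F') with hA
  set P := Finset.univ.filter (fun f : Perm α => IsPMg f) with hP
  -- the A M for M ∈ Φ are pairwise disjoint
  have hAdisj : ∀ M ∈ Φ, ∀ M' ∈ Φ, M ≠ M' → Disjoint (A M) (A M') := by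
    intro M hM M' hM' hne
    rw [Finset.disjoint_left]
    intro g hg hg'
    simp only [hA, Finset.mem_filter, Finset.mem_univ, true_and] at hg hg'
    obtain ⟨i, hi⟩ := hF'int _ hg _ hg'
    simp only [Equiv.Perm.mul_apply] at hi
    have : M (g⁻¹ i) = M' (g⁻¹ i) := g.injective hi
    exact hΦdisj M hM M' hM' hne (g⁻¹ i) this
  have hsum_le : ∑ M ∈ Φ, (A M).card ≤ (2*n)! := by
    rw [← Finset.card_biUnion hAdisj]
    calc (Φ.biUnion A).card ≤ (Finset.univ : Finset (Perm α)).card :=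
          Finset.card_le_card (Finset.subset_univ _)
      _ = (2*n)! := by rw [Finset.card_univ, Fintype.card_perm, Fintype.card_fin]
  have hAM : ∀ M ∈ Φ, (A M).card * P.card = F'.card * (2*n)! := by
    intro M hM
    have hfib : (A M).card
        = ∑ f ∈ F', (Finset.univ.filter fun g : Perm α => g * M * g⁻¹ = f).card := by
      rw [Finset.card_eq_sum_card_fiberwise
        (f := fun g : Perm α => g * M * g⁻¹) (t := F')
        (fun g hg => by simpa [hA] using hg)]
      apply Finset.sum_congr rfl
      intro f hf
      congr 1
      ext g
      simp only [hA, Finset.mem_filter, Finset.mem_univ, true_and]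
      constructor
      · rintro ⟨-, h⟩; exact h
      · intro h; exact ⟨by rw [h]; exact hf, h⟩
    rw [hfib, Finset.sum_mul]
    have : ∀ f ∈ F',
        (Finset.univ.filter fun g : Perm α => g * M * g⁻¹ = f).card * P.card = (2*n)! := by
      intro f hf
      have := fiber_card_mul (hΦpm M hM) (hF'pm f hf)
      rwa [Fintype.card_fin] at this
    rw [Finset.sum_congr rfl this, Finset.sum_const, smul_eq_mul]
  have hmain : (2*n - 1) * F.card * (2*n)! ≤ (2*n)! * P.card := by
    calc (2*n - 1) * F.card * (2*n)!
        = ∑ _M ∈ Φ, (F'.card * (2*n)!) := by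
          rw [Finset.sum_const, smul_eq_mul, hΦcard, hF'card, mul_assoc]
      _ = ∑ M ∈ Φ, (A M).card * P.card := (Finset.sum_congr rfl (fun M hM => (hAM M hM).symm))
      _ = (∑ M ∈ Φ, (A M).card) * P.card := by rw [Finset.sum_mul]
      _ ≤ (2*n)! * P.card := Nat.mul_le_mul_right _ hsum_le
  have hPle : P.card ≤ (2*n - 1)‼ := pm_count (2*n) α (Fintype.card_fin _)
  have hDF : (2*n - 1)‼ ≤ (2*n - 1) * (2 * (n-1) - 1)‼ := by
    rcases Nat.lt_or_ge n 2 with h2 | h2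
    · have hn1 : n = 1 := by omega
      rw [hn1]
      decide
    · have e1 : 2*n - 1 = (2*(n-1) - 1) + 2 := by omega
      rw [e1, Nat.doubleFactorial_add_two]
  have step1 : (2*n - 1) * F.card * (2*n)! ≤ ((2*n - 1) * (2 * (n-1) - 1)‼) * (2*n)! := by
    calc (2*n - 1) * F.card * (2*n)! ≤ (2*n)! * P.card := hmain
      _ ≤ (2*n)! * ((2*n - 1) * (2 * (n-1) - 1)‼) :=
          Nat.mul_le_mul_left _ (le_trans hPle hDF)
      _ = ((2*n - 1) * (2 * (n-1) - 1)‼) * (2*n)! := mul_comm _ _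
  have step2 : (2*n - 1) * F.card ≤ (2*n - 1) * (2 * (n-1) - 1)‼ :=
    Nat.le_of_mul_le_mul_right step1 (Nat.factorial_pos _)
  exact Nat.le_of_mul_le_mul_left step2 (by omega)
end

section
/- For a k-regular graph Γ on n vertices with smallest adjacency eigenvalue η < 0, every independent set S satisfies |S| ≤ n·(-η)/(k - η). -/
open Matrix Finset

lemma quad_form_ge {V : Type} [Fintype V] [DecidableEq V] (A : Matrix V V ℝ)
    (hA : A.IsHermitian) (η : ℝ) (hmin : ∀ μ ∈ spectrum ℝ A, η ≤ μ) (x : V → ℝ) :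
    η * (x ⬝ᵥ x) ≤ x ⬝ᵥ (A *ᵥ x) := by
  set M : Matrix V V ℝ := A - η • (1 : Matrix V V ℝ) with hMdef
  have hM : M.IsHermitian := by
    refine hA.sub ?_
    unfold Matrix.IsHermitian
    simp [Matrix.conjTranspose_smul]
  have hMalg : M = A - algebraMap ℝ (Matrix V V ℝ) η := by
    rw [hMdef, Algebra.algebraMap_eq_smul_one]
  have hspec : ∀ lam ∈ spectrum ℝ M, 0 ≤ lam := by
    intro lam hlam
    rw [hMalg, ← spectrum.sub_singleton_eq] at hlam
    rw [Set.mem_sub] at hlam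
    obtain ⟨μ, hμ, y, hy, h⟩ := hlam
    rw [Set.mem_singleton_iff] at hy
    subst hy
    have := hmin μ hμ
    linarith [h ▸ sub_nonneg.mpr this]
  have hpsd : M.PosSemidef := by
    have hdiag : (Matrix.diagonal (RCLike.ofReal ∘ hM.eigenvalues) : Matrix V V ℝ).PosSemidef := by
      refine Matrix.PosSemidef.diagonal ?_
      intro i
      have := hspec _ (hM.eigenvalues_mem_spectrum_real i)
      simpa using this
    have := hdiag.mul_mul_conjTranspose_same (hM.eigenvectorUnitary : Matrix V V ℝ)
    rw [← Matrix.star_eq_conjTranspose, ← Unitary.conjStarAlgAut_apply (S := ℝ), ← hM.spectral_theorem] at this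
    exact this
  have h0 := hpsd.dotProduct_mulVec_nonneg x
  simp only [star_trivial, hMdef, Matrix.sub_mulVec, Matrix.smul_mulVec,
    Matrix.one_mulVec, dotProduct_sub, dotProduct_smul, smul_eq_mul] at h0
  linarith

/-- The Delsarte–Hoffman ratio bound: if `G` is a `k`-regular graph on a finite vertex
set `V` whose adjacency matrix has smallest eigenvalue `η < 0`, then every independent
set `s` of `G` satisfies `|s| ≤ |V| * (-η) / (k - η)`. -/
theorem ratio_bound {V : Type} [Fintype V] [DecidableEq V]
    (G : SimpleGraph V) [DecidableRel G.Adj] (k : ℕ) (hreg : G.IsRegularOfDegree k)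
    (η : ℝ) (hmem : η ∈ spectrum ℝ (G.adjMatrix ℝ))
    (hmin : ∀ μ ∈ spectrum ℝ (G.adjMatrix ℝ), η ≤ μ) (hneg : η < 0)
    (s : Finset V) (hs : ∀ u ∈ s, ∀ v ∈ s, ¬ G.Adj u v) :
    (s.card : ℝ) ≤ (Fintype.card V : ℝ) * (-η) / ((k : ℝ) - η) := by
  set A : Matrix V V ℝ := G.adjMatrix ℝ with hAdef
  have hkη : (0:ℝ) < (k:ℝ) - η := by
    have : (0:ℝ) ≤ (k:ℝ) := Nat.cast_nonneg k
    linarith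
  set α : ℝ := (s.card : ℝ) with hα
  set n : ℝ := (Fintype.card V : ℝ) with hn
  rcases eq_or_lt_of_le (show (0:ℝ) ≤ α by rw [hα]; positivity) with h0 | hαpos
  · rw [← h0]
    have hn0 : (0:ℝ) ≤ n := by rw [hn]; positivity
    exact div_nonneg (mul_nonneg hn0 (by linarith)) (le_of_lt hkη)
  have hnpos : (0:ℝ) < n := by
    have hcard : 0 < s.card := by
      rw [hα] at hαpos; exact_mod_cast hαpos
    have h2 : 0 < Fintype.card V :=
      lt_of_lt_of_le hcard (Finset.card_le_card (Finset.subset_univ s))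
    rw [hn]; exact_mod_cast h2
  -- indicator
  set f : V → ℝ := fun v => if v ∈ s then 1 else 0 with hf
  set c : ℝ := α / n with hc
  set x : V → ℝ := fun v => f v - c with hx
  have hAsym : A.IsHermitian := by
    unfold Matrix.IsHermitian
    ext u v
    simp [hAdef, Matrix.conjTranspose_apply, G.adj_comm u v]
  -- row sums
  have hrow : ∀ u, (∑ v, A u v) = (k:ℝ) := by
    intro u
    simp only [hAdef, SimpleGraph.adjMatrix_apply]
    rw [Finset.sum_boole]
    have : Finset.univ.filter (fun v => G.Adj u v) = G.neighborFinset u := by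
      ext v; simp [SimpleGraph.mem_neighborFinset]
    rw [this]
    rw [show (G.neighborFinset u).card = G.degree u from rfl, hreg u]
  have hcol : ∀ v, (∑ u, A u v) = (k:ℝ) := by
    intro v
    rw [← hrow v]
    exact Finset.sum_congr rfl fun u _ => by
      simp [hAdef, G.adj_comm u v]
  have hfsum : (∑ u, f u) = α := by
    simp [hf, hα]
  have hfsq : (∑ u, f u * f u) = α := by
    rw [← hfsum]
    refine Finset.sum_congr rfl fun u _ => ?_
    by_cases h : u ∈ s <;> simp [hf, h]
  -- S u := ∑ v, A u v * f v
  have hfS : ∀ u, f u * (∑ v, A u v * f v) = 0 := by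
    intro u
    by_cases hu : u ∈ s
    · have : (∑ v, A u v * f v) = 0 := by
        refine Finset.sum_eq_zero fun v _ => ?_
        by_cases hv : v ∈ s
        · have : ¬ G.Adj u v := hs u hu v hv
          simp [hAdef, this]
        · simp [hf, hv]
      rw [this, mul_zero]
    · simp [hf, hu]
  have hSsum : (∑ u, ∑ v, A u v * f v) = (k:ℝ) * α := by
    rw [Finset.sum_comm]
    calc (∑ v, ∑ u, A u v * f v) = ∑ v, (∑ u, A u v) * f v := by
          refine Finset.sum_congr rfl fun v _ => ?_
          rw [Finset.sum_mul]
      _ = ∑ v, (k:ℝ) * f v := by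
          refine Finset.sum_congr rfl fun v _ => by rw [hcol v]
      _ = (k:ℝ) * α := by rw [← Finset.mul_sum, hfsum]
  -- quadratic form value
  have hmv : ∀ u, (A *ᵥ x) u = (∑ v, A u v * f v) - c * (k:ℝ) := by
    intro u
    simp only [Matrix.mulVec, dotProduct, hx]
    have : (∑ v, A u v * (f v - c)) = (∑ v, A u v * f v) - c * (∑ v, A u v) := by
      rw [Finset.mul_sum, ← Finset.sum_sub_distrib]
      exact Finset.sum_congr rfl fun v _ => by ring
    rw [this, hrow u]
  have hQ : x ⬝ᵥ (A *ᵥ x) = c^2*(k:ℝ)*n - 2*c*(k:ℝ)*α := by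
    have step : x ⬝ᵥ (A *ᵥ x)
        = ∑ u, (-c * (∑ v, A u v * f v) + (-(c*(k:ℝ)) * f u + c^2*(k:ℝ))) := by
      simp only [dotProduct]
      refine Finset.sum_congr rfl fun u _ => ?_
      rw [hmv u]
      have h := hfS u
      simp only [hx]
      linear_combination h
    rw [step, Finset.sum_add_distrib, ← Finset.mul_sum, hSsum, Finset.sum_add_distrib,
      ← Finset.mul_sum, hfsum, Finset.sum_const, Finset.card_univ]
    simp only [nsmul_eq_mul, ← hn]
    ring
  have hXX : x ⬝ᵥ x = α - 2*c*α + c^2*n := by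
    simp only [dotProduct, hx]
    have : (∑ u, (f u - c) * (f u - c))
        = (∑ u, f u * f u) - 2*c*(∑ u, f u) + (∑ u : V, c^2) := by
      rw [Finset.mul_sum, ← Finset.sum_sub_distrib, ← Finset.sum_add_distrib]
      exact Finset.sum_congr rfl fun u _ => by ring
    rw [this, hfsq, hfsum, Finset.sum_const, Finset.card_univ]
    simp only [nsmul_eq_mul, ← hn]
    ring
  have key := quad_form_ge A hAsym η hmin x
  rw [hQ, hXX] at key
  have hcn : c * n = α := by
    rw [hc]; field_simp
  have e1 : c^2*n = c*α := by rw [← hcn]; ring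
  have e2 : c^2*(k:ℝ)*n = c*(k:ℝ)*α := by rw [← hcn]; ring
  rw [e1, e2] at key
  have h3' : α * (η + c*((k:ℝ)-η)) ≤ α * 0 := by nlinarith [key]
  have h4 : η + c*((k:ℝ)-η) ≤ 0 := by
    have := (mul_le_mul_iff_right₀ hαpos).mp h3'
    linarith
  rw [le_div_iff₀ hkη, ← hcn]
  nlinarith [h4, hnpos]
end

section
/- The collection of matrices {A_λ : λ ⊢ n}, where A_λ is the 01-matrix indexed by pairs of perfect matchings of K_{2n} with (A_λ)_{m,m'} = 1 iff the cycle type d(m,m') = λ, forms a symmetric commutative association scheme. -/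
open scoped Classical

/-- The cycle type `d(m,m')` of the union multigraph `m ∪ m'`, encoded as the cycle
type of the permutation `m * m'`: a cycle of length `2λᵢ` of the union multigraph
corresponds to two `λᵢ`-cycles of `m * m'` (with the parts `λᵢ = 1` becoming fixed
points).  This multiset determines and is determined by the partition `d(m,m') ⊢ n`. -/
noncomputable def dtype (n : ℕ) (m m' : PMV n) : Multiset ℕ :=
  (m.1 * m'.1).cycleType

/-- The `λ`-associate of the matching association scheme: the 01-matrix indexed by
pairs of perfect matchings of `K_{2n}` whose `(m,m')` entry is `1` iff `d(m,m') = μ`. -/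
noncomputable def Amat (n : ℕ) (μ : Multiset ℕ) : Matrix (PMV n) (PMV n) ℕ :=
  Matrix.of fun m m' => if dtype n m m' = μ then 1 else 0

/-- The index set: all cycle types realized by pairs of perfect matchings of `K_{2n}`. -/
noncomputable def dtypes (n : ℕ) : Finset (Multiset ℕ) :=
  Finset.image (fun p : PMV n × PMV n => dtype n p.1 p.2) Finset.univ


section ConjHelpers
set_option linter.unusedSectionVars false
open Equiv Equiv.Perm Function

variable {α : Type*} [Fintype α] [DecidableEq α]

lemma fix_zpow (f : Equiv.Perm α) {x : α} (h : f x = x) : ∀ q : ℤ, (f ^ q) x = x := by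
  have hn : ∀ n : ℕ, (f ^ n) x = x := by
    intro n; induction n with
    | zero => simp
    | succ k ih => rw [pow_succ, Equiv.Perm.mul_apply, h, ih]
  intro q
  rcases q with n | n
  · simpa using hn n
  · rw [Int.negSucc_eq, zpow_neg]
    have h2 : (f ^ ((n:ℤ)+1)) x = x := by
      have := hn (n+1); rw [← zpow_natCast] at this; push_cast at this; exact this
    conv_lhs => rw [← h2]
    simp

lemma mp_pos (f : Equiv.Perm α) (x : α) : 0 < Function.minimalPeriod f x := by
  have h : Function.IsPeriodicPt f (orderOf f) x := by
    have : f ^ (orderOf f) = 1 := pow_orderOf_eq_one f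
    unfold Function.IsPeriodicPt Function.IsFixedPt
    rw [← Equiv.Perm.coe_pow, this]; rfl
  exact h.minimalPeriod_pos (orderOf_pos f)

lemma pow_fix_iff (f : Equiv.Perm α) (x : α) (n : ℕ) :
    (f ^ n) x = x ↔ Function.minimalPeriod f x ∣ n := by
  rw [← Function.isPeriodicPt_iff_minimalPeriod_dvd]
  unfold Function.IsPeriodicPt Function.IsFixedPt
  rw [← Equiv.Perm.coe_pow]

lemma zpow_fix_iff (f : Equiv.Perm α) (x : α) (m : ℤ) :
    (f ^ m) x = x ↔ (Function.minimalPeriod f x : ℤ) ∣ m := by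
  set L : ℕ := Function.minimalPeriod f x with hL
  have hLpos : 0 < L := mp_pos f x
  have hfix : (f ^ (L : ℤ)) x = x := by
    rw [zpow_natCast, pow_fix_iff]
  constructor
  · intro h
    have hq : (f ^ ((L:ℤ) * (m / (L:ℤ)))) x = x := by
      rw [zpow_mul]; exact fix_zpow _ hfix _
    have hr : (f ^ (m % (L:ℤ))) x = x := by
      have hdm := Int.mul_ediv_add_emod m (L:ℤ)
      have hm : m % (L:ℤ) = (-((L:ℤ) * (m/(L:ℤ)))) + m := by omega
      rw [hm, zpow_add, Equiv.Perm.mul_apply, h, zpow_neg]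
      conv_lhs => rw [← hq]
      simp
    have h0 : 0 ≤ m % (L:ℤ) := Int.emod_nonneg m (by positivity)
    have h1 : m % (L:ℤ) < (L:ℤ) := Int.emod_lt_of_pos m (by positivity)
    have h2 : (f ^ (m % (L:ℤ)).toNat) x = x := by
      rw [← zpow_natCast, Int.toNat_of_nonneg h0]; exact hr
    rw [pow_fix_iff] at h2
    have h3 : (m % (L:ℤ)).toNat = 0 := by
      rcases Nat.eq_zero_or_pos (m % (L:ℤ)).toNat with h' | h'
      · exact h'
      · exfalso; have := Nat.le_of_dvd h' h2; omega
    have : m % (L:ℤ) = 0 := by omega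
    exact Int.dvd_of_emod_eq_zero this
  · rintro ⟨q, rfl⟩
    rw [zpow_mul]
    exact fix_zpow _ hfix q

lemma mp_eq_of_iff {f : Equiv.Perm α} {x y : α}
    (h : ∀ n : ℤ, (f ^ n) x = x ↔ (f ^ n) y = y) :
    Function.minimalPeriod f x = Function.minimalPeriod f y := by
  have hx := mp_pos f x
  have hy := mp_pos f y
  have h1 : (Function.minimalPeriod f x : ℤ) ∣ (Function.minimalPeriod f y : ℤ) := by
    rw [← zpow_fix_iff f x, h, zpow_fix_iff]
  have h2 : (Function.minimalPeriod f y : ℤ) ∣ (Function.minimalPeriod f x : ℤ) := by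
    rw [← zpow_fix_iff f y, ← h, zpow_fix_iff]
  have := Int.dvd_antisymm (by positivity) (by positivity) h1 h2
  exact_mod_cast this

lemma mp_sameCycle {f : Equiv.Perm α} {x y : α} (h : f.SameCycle x y) :
    Function.minimalPeriod f x = Function.minimalPeriod f y := by
  obtain ⟨i, rfl⟩ := h
  apply mp_eq_of_iff
  intro n
  constructor
  · intro hn
    have : (f ^ n) ((f ^ i) x) = (f ^ i) ((f ^ n) x) := by
      rw [← Equiv.Perm.mul_apply, ← Equiv.Perm.mul_apply, ← zpow_add, ← zpow_add, add_comm]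
    rw [this, hn]
  · intro hn
    have : (f ^ n) ((f ^ i) x) = (f ^ i) ((f ^ n) x) := by
      rw [← Equiv.Perm.mul_apply, ← Equiv.Perm.mul_apply, ← zpow_add, ← zpow_add, add_comm]
    rw [this] at hn
    exact (f ^ i).injective hn

lemma cycleType_fpf {g : Equiv.Perm α} (h1 : Function.Involutive g) (h2 : ∀ x, g x ≠ x) :
    g.cycleType = Multiset.replicate (Fintype.card α / 2) 2 := by
  have hsq : g ^ 2 = 1 := by
    ext x; simp [pow_succ, h1 x]
  have hord : orderOf g ∣ 2 := orderOf_dvd_of_pow_eq_one hsq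
  have hall : ∀ b ∈ g.cycleType, b = 2 := by
    intro b hb
    have h2le : 2 ≤ b := Equiv.Perm.two_le_of_mem_cycleType hb
    have : b ∣ orderOf g := by rw [← Equiv.Perm.lcm_cycleType]; exact Multiset.dvd_lcm hb
    have : b ∣ 2 := this.trans hord
    have := Nat.le_of_dvd (by norm_num) this
    omega
  have hrep := Multiset.eq_replicate_card.mpr hall
  have hsum : g.cycleType.sum = Fintype.card α := by
    rw [Equiv.Perm.sum_cycleType]
    have : g.support = Finset.univ := by
      ext x; simp [Equiv.Perm.mem_support, h2 x]
    rw [this, Finset.card_univ]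
  have hcard : 2 * Multiset.card g.cycleType = Fintype.card α := by
    conv_rhs => rw [← hsum]
    rw [hrep, Multiset.sum_replicate]
    simp [mul_comm]
  rw [hrep]
  congr 1
  omega

lemma fpf_conj {g g' : Equiv.Perm α} (h1 : Function.Involutive g) (h2 : ∀ x, g x ≠ x)
    (h1' : Function.Involutive g') (h2' : ∀ x, g' x ≠ x) :
    ∃ τ : Equiv.Perm α, ∀ x, τ (g x) = g' (τ x) := by
  have : IsConj g g' := by
    rw [Equiv.Perm.isConj_iff_cycleType_eq, cycleType_fpf h1 h2, cycleType_fpf h1' h2']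
  obtain ⟨τ, hτ⟩ := isConj_iff.mp this
  refine ⟨τ, fun x => ?_⟩
  have := congrArg (fun p : Equiv.Perm α => p (τ x)) hτ
  simpa using this

lemma psi_exists {Ω : Type*} [Fintype Ω] [DecidableEq Ω] (L : Ω → ℕ) (u u' : Equiv.Perm Ω)
    (hu : Function.Involutive u) (hu' : Function.Involutive u')
    (hfu : ∀ ω, u ω ≠ ω) (hfu' : ∀ ω, u' ω ≠ ω)
    (hLu : ∀ ω, L (u ω) = L ω) (hLu' : ∀ ω, L (u' ω) = L ω) :
    ∃ ψ : Equiv.Perm Ω, (∀ ω, L (ψ ω) = L ω) ∧ ∀ ω, ψ (u ω) = u' (ψ ω) := by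
  have hiffu : ∀ k : ℕ, ∀ ω, L (u ω) = k ↔ L ω = k := by
    intro k ω; rw [hLu]
  have hiffu' : ∀ k : ℕ, ∀ ω, L (u' ω) = k ↔ L ω = k := by
    intro k ω; rw [hLu']
  have hτ : ∀ k : ℕ, ∃ τ : Equiv.Perm {ω // L ω = k},
      ∀ z, τ ((u.subtypePerm (hiffu k)) z) = (u'.subtypePerm (hiffu' k)) (τ z) := by
    intro k
    apply fpf_conj
    · intro z; apply Subtype.ext; simpa using hu z.1
    · intro z hz; exact hfu z.1 (congrArg Subtype.val hz)
    · intro z; apply Subtype.ext; simpa using hu' z.1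
    · intro z hz; exact hfu' z.1 (congrArg Subtype.val hz)
  choose τ hτspec using hτ
  set Ψ : Ω → Ω := fun ω => (τ (L ω) ⟨ω, rfl⟩ : _).1 with hΨ
  set Ψi : Ω → Ω := fun ω => ((τ (L ω))⁻¹ ⟨ω, rfl⟩ : _).1 with hΨi
  have hgen : ∀ (k : ℕ) (ω : Ω) (h : L ω = k), Ψ ω = (τ k ⟨ω, h⟩ : _).1 := by
    intro k ω h; subst h; rfl
  have hgeni : ∀ (k : ℕ) (ω : Ω) (h : L ω = k), Ψi ω = ((τ k)⁻¹ ⟨ω, h⟩ : _).1 := by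
    intro k ω h; subst h; rfl
  have hLΨ : ∀ ω, L (Ψ ω) = L ω := fun ω => (τ (L ω) ⟨ω, rfl⟩).2
  have hLΨi : ∀ ω, L (Ψi ω) = L ω := fun ω => ((τ (L ω))⁻¹ ⟨ω, rfl⟩).2
  have hleft : ∀ ω, Ψi (Ψ ω) = ω := by
    intro ω
    rw [hgeni (L ω) (Ψ ω) (hLΨ ω)]
    have : (⟨Ψ ω, hLΨ ω⟩ : {x // L x = L ω}) = τ (L ω) ⟨ω, rfl⟩ := by
      apply Subtype.ext; exact hgen (L ω) ω rfl
    rw [this, (fun (f : Equiv.Perm {x // L x = L ω}) x => (Equiv.Perm.inv_eq_iff_eq.mpr rfl : f⁻¹ (f x) = x))]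
  have hright : ∀ ω, Ψ (Ψi ω) = ω := by
    intro ω
    rw [hgen (L ω) (Ψi ω) (hLΨi ω)]
    have : (⟨Ψi ω, hLΨi ω⟩ : {x // L x = L ω}) = (τ (L ω))⁻¹ ⟨ω, rfl⟩ := by
      apply Subtype.ext; exact hgeni (L ω) ω rfl
    rw [this, (fun (f : Equiv.Perm {x // L x = L ω}) x => ((Equiv.Perm.inv_eq_iff_eq.mp rfl).symm : f (f⁻¹ x) = x))]
  refine ⟨Equiv.mk Ψ Ψi hleft hright, hLΨ, ?_⟩
  intro ω
  show Ψ (u ω) = u' (Ψ ω)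
  rw [hgen (L ω) (u ω) (hLu ω)]
  have : (⟨u ω, hLu ω⟩ : {x // L x = L ω}) = (u.subtypePerm (p := fun x => L x = L ω) (hiffu (L ω))) ⟨ω, rfl⟩ := by
    apply Subtype.ext; simp
  rw [this, hτspec (L ω) ⟨ω, rfl⟩]
  rw [Equiv.Perm.subtypePerm_apply]

def cycSetoid (c : Equiv.Perm α) : Setoid α :=
  ⟨c.SameCycle, ⟨Equiv.Perm.SameCycle.refl c, fun h => h.symm, fun h h' => h.trans h'⟩⟩

abbrev COrb (c : Equiv.Perm α) := Quotient (cycSetoid c)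

noncomputable def orbq (c : Equiv.Perm α) : α → COrb c := Quotient.mk _

noncomputable def repq (c : Equiv.Perm α) : COrb c → α := Quotient.out

noncomputable def ell (c : Equiv.Perm α) (ω : COrb c) : ℕ :=
  Function.minimalPeriod c (repq c ω)

noncomputable def ptq (c : Equiv.Perm α) (ω : COrb c) (i : ℤ) : α := (c ^ i) (repq c ω)

lemma orb_rep (c : Equiv.Perm α) (ω : COrb c) : orbq c (repq c ω) = ω := Quotient.out_eq ω

lemma orb_eq_iff (c : Equiv.Perm α) (x y : α) : orbq c x = orbq c y ↔ c.SameCycle x y := by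
  constructor
  · intro h; exact Quotient.exact h
  · intro h; exact Quotient.sound h

lemma rep_orb_sameCycle (c : Equiv.Perm α) (x : α) : c.SameCycle (repq c (orbq c x)) x :=
  @Quotient.mk_out α (cycSetoid c) x

lemma czpow_apply (c : Equiv.Perm α) (m k : ℤ) (z : α) :
    (c ^ m) ((c ^ k) z) = (c ^ (m + k)) z := by
  rw [← Equiv.Perm.mul_apply, ← zpow_add]

lemma orb_pt (c : Equiv.Perm α) (ω : COrb c) (i : ℤ) : orbq c (ptq c ω i) = ω := by
  have : orbq c (ptq c ω i) = orbq c (repq c ω) := by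
    rw [orb_eq_iff]
    exact ⟨-i, by rw [show ptq c ω i = (c ^ i) (repq c ω) from rfl, czpow_apply]; simp⟩
  rw [this, orb_rep]

lemma pt_inj (c : Equiv.Perm α) (ω : COrb c) (i i' : ℤ) :
    ptq c ω i = ptq c ω i' ↔ (ell c ω : ℤ) ∣ i - i' := by
  unfold ell ptq
  rw [← zpow_fix_iff c (repq c ω) (i - i')]
  constructor
  · intro h
    have := congrArg (fun z => (c ^ (-i')) z) h
    rw [czpow_apply, czpow_apply] at this
    simpa [sub_eq_add_neg, add_comm] using this
  · intro h
    have := congrArg (fun z => (c ^ i') z) h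
    rw [czpow_apply] at this
    rw [show i' + (i - i') = i by ring] at this
    exact this

lemma exists_pt (c : Equiv.Perm α) (y : α) : ∃ i : ℤ, ptq c (orbq c y) i = y :=
  rep_orb_sameCycle c y

lemma pt_c (c : Equiv.Perm α) (ω : COrb c) (i : ℤ) : c (ptq c ω i) = ptq c ω (i + 1) := by
  show c ((c ^ i) (repq c ω)) = (c ^ (i+1)) (repq c ω)
  rw [show i + 1 = 1 + i by ring, zpow_add, zpow_one, Equiv.Perm.mul_apply]

lemma ell_orb (c : Equiv.Perm α) (x : α) :
    ell c (orbq c x) = Function.minimalPeriod c x :=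
  mp_sameCycle (rep_orb_sameCycle c x)

lemma a_zpow (c a : Equiv.Perm α) (hio : a * c * a⁻¹ = c⁻¹) (i : ℤ) (z : α) :
    a ((c ^ i) z) = (c ^ (-i)) (a z) := by
  have h1 : a * c ^ i * a⁻¹ = c ^ (-i) := by
    rw [← conj_zpow, hio, inv_zpow, zpow_neg]
  have := congrArg (fun p : Equiv.Perm α => p (a z)) h1
  simpa using this

lemma sameCycle_a (c a : Equiv.Perm α) (hio : a * c * a⁻¹ = c⁻¹) {x y : α}
    (h : c.SameCycle x y) : c.SameCycle (a x) (a y) := by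
  obtain ⟨i, rfl⟩ := h
  exact ⟨-i, (a_zpow c a hio i x).symm⟩

noncomputable def abar (c a : Equiv.Perm α) (ha : Function.Involutive a)
    (hio : a * c * a⁻¹ = c⁻¹) : Equiv.Perm (COrb c) := by
  refine Function.Involutive.toPerm
    (Quotient.map a (fun x y h => sameCycle_a c a hio h)) ?_
  intro q
  induction q using Quotient.ind with
  | _ x => exact congrArg (Quotient.mk _) (ha x)

lemma abar_orb (c a : Equiv.Perm α) (ha : Function.Involutive a)
    (hio : a * c * a⁻¹ = c⁻¹) (x : α) :
    abar c a ha hio (orbq c x) = orbq c (a x) := by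
  have h0 : abar c a ha hio (orbq c x)
      = Quotient.map a (fun x y h => sameCycle_a c a hio h) (orbq c x) := rfl
  rw [h0]
  exact Quotient.map_mk _ _ _

lemma abar_invol (c a : Equiv.Perm α) (ha : Function.Involutive a)
    (hio : a * c * a⁻¹ = c⁻¹) (ω : COrb c) :
    abar c a ha hio (abar c a ha hio ω) = ω := by
  conv_lhs => rw [← orb_rep c ω]
  rw [abar_orb, abar_orb, ha (repq c ω), orb_rep]

lemma mp_a (c a : Equiv.Perm α) (hio : a * c * a⁻¹ = c⁻¹) (x : α) :
    Function.minimalPeriod c (a x) = Function.minimalPeriod c x := by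
  apply mp_eq_of_iff
  intro n
  rw [show (c ^ n) (a x) = a ((c ^ (-n)) x) by rw [a_zpow c a hio]; simp]
  constructor
  · intro h
    have h2 : (c ^ (-n)) x = x := a.injective h
    rw [zpow_fix_iff] at h2 ⊢
    exact (dvd_neg.mp h2)
  · intro h
    have : (c ^ (-n)) x = x := by rw [zpow_fix_iff] at h ⊢; exact dvd_neg.mpr h
    rw [this]

lemma ell_abar (c a : Equiv.Perm α) (ha : Function.Involutive a)
    (hio : a * c * a⁻¹ = c⁻¹) (ω : COrb c) :
    ell c (abar c a ha hio ω) = ell c ω := by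
  conv_lhs => rw [← orb_rep c ω]
  rw [abar_orb, ell_orb, mp_a c a hio, ← ell_orb, orb_rep]

lemma not_sameCycle_a (c a : Equiv.Perm α) (haf : ∀ x, a x ≠ x)
    (hbf : ∀ x, (a * c) x ≠ x) (hio : a * c * a⁻¹ = c⁻¹) (x : α) :
    ¬ c.SameCycle x (a x) := by
  rintro ⟨i, hi⟩
  rcases Int.even_or_odd i with ⟨j, hj⟩ | ⟨j, hj⟩
  · have : a ((c ^ j) x) = (c ^ j) x := by
      rw [a_zpow c a hio, ← hi, czpow_apply, show -j + i = j by omega]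
    exact haf _ this
  · have hstep : (c : Equiv.Perm α) ((c ^ j) x) = (c ^ (j + 1)) x := by
      have : (c : Equiv.Perm α) ((c ^ j) x) = (c ^ (1:ℤ)) ((c ^ j) x) := by simp
      rw [this, czpow_apply, add_comm]
    have : (a * c) ((c ^ j) x) = (c ^ j) x := by
      rw [Equiv.Perm.mul_apply, hstep, a_zpow c a hio, ← hi, czpow_apply,
        show -(j+1) + i = j by omega]
    exact hbf _ this

lemma abar_ne (c a : Equiv.Perm α) (ha : Function.Involutive a)
    (hio : a * c * a⁻¹ = c⁻¹) (haf : ∀ x, a x ≠ x) (hbf : ∀ x, (a * c) x ≠ x)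
    (ω : COrb c) : abar c a ha hio ω ≠ ω := by
  intro h
  rw [← orb_rep c ω, abar_orb] at h
  rw [orb_eq_iff] at h
  exact not_sameCycle_a c a haf hbf hio (repq c ω) h.symm

lemma key2 (c a a' : Equiv.Perm α)
    (ha : Function.Involutive a) (ha' : Function.Involutive a')
    (haf : ∀ x, a x ≠ x) (ha'f : ∀ x, a' x ≠ x)
    (hbf : ∀ x, (a * c) x ≠ x) (hb'f : ∀ x, (a' * c) x ≠ x)
    (hio : a * c * a⁻¹ = c⁻¹) (hio' : a' * c * a'⁻¹ = c⁻¹) :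
    ∃ ρ : Equiv.Perm α, ρ * c * ρ⁻¹ = c ∧ ρ * a * ρ⁻¹ = a' := by
  classical
  haveI : Finite (COrb c) := Quotient.finite _
  haveI : Fintype (COrb c) := Fintype.ofFinite _
  haveI : DecidableEq (COrb c) := Classical.decEq _
  set A := abar c a ha hio with hA
  set A' := abar c a' ha' hio' with hA'
  obtain ⟨ψ, hψL, hψA⟩ := psi_exists (ell c) A A'
    (abar_invol c a ha hio) (abar_invol c a' ha' hio')
    (abar_ne c a ha hio haf hbf) (abar_ne c a' ha' hio' ha'f hb'f)
    (ell_abar c a ha hio) (ell_abar c a' ha' hio')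
  have hjex : ∀ ω : COrb c, ∃ i : ℤ, ptq c (A ω) i = a (repq c ω) := by
    intro ω
    obtain ⟨i, hi⟩ := exists_pt c (a (repq c ω))
    refine ⟨i, ?_⟩
    rw [← hi]
    congr 1
    conv_lhs => rw [← orb_rep c ω]
    rw [hA, abar_orb]
  have hjex' : ∀ ω : COrb c, ∃ i : ℤ, ptq c (A' ω) i = a' (repq c ω) := by
    intro ω
    obtain ⟨i, hi⟩ := exists_pt c (a' (repq c ω))
    refine ⟨i, ?_⟩
    rw [← hi]
    congr 1
    conv_lhs => rw [← orb_rep c ω]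
    rw [hA', abar_orb]
  choose j hj using hjex
  choose j' hj' using hjex'
  choose e he using exists_pt c
  have hapt : ∀ (ω : COrb c) (i : ℤ), a (ptq c ω i) = ptq c (A ω) (j ω - i) := by
    intro ω i
    show a ((c ^ i) (repq c ω)) = _
    rw [a_zpow c a hio, ← hj ω]
    show (c ^ (-i)) ((c ^ (j ω)) (repq c (A ω))) = _
    rw [czpow_apply, show -i + j ω = j ω - i by ring]
    rfl
  have hapt' : ∀ (ω : COrb c) (i : ℤ), a' (ptq c ω i) = ptq c (A' ω) (j' ω - i) := by
    intro ω i
    show a' ((c ^ i) (repq c ω)) = _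
    rw [a_zpow c a' hio', ← hj' ω]
    show (c ^ (-i)) ((c ^ (j' ω)) (repq c (A' ω))) = _
    rw [czpow_apply, show -i + j' ω = j' ω - i by ring]
    rfl
  have hAA : ∀ ω, A (A ω) = ω := abar_invol c a ha hio
  have hAA' : ∀ ω, A' (A' ω) = ω := abar_invol c a' ha' hio'
  have hjsym : ∀ ω, (ell c ω : ℤ) ∣ j (A ω) - j ω := by
    intro ω
    have h1 : a (ptq c (A ω) (j ω)) = repq c ω := by rw [hj ω, ha]
    rw [hapt (A ω) (j ω), hAA ω] at h1
    have h2 : ptq c ω (j (A ω) - j ω) = ptq c ω 0 := by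
      rw [h1]
      show _ = (c ^ (0:ℤ)) (repq c ω)
      simp
    have := (pt_inj c ω _ 0).mp h2
    simpa using this
  have hjsym' : ∀ ω, (ell c ω : ℤ) ∣ j' (A' ω) - j' ω := by
    intro ω
    have h1 : a' (ptq c (A' ω) (j' ω)) = repq c ω := by rw [hj' ω, ha']
    rw [hapt' (A' ω) (j' ω), hAA' ω] at h1
    have h2 : ptq c ω (j' (A' ω) - j' ω) = ptq c ω 0 := by
      rw [h1]
      show _ = (c ^ (0:ℤ)) (repq c ω)
      simp
    have := (pt_inj c ω _ 0).mp h2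
    simpa using this
  set num := Fintype.equivFin (COrb c) with hnum
  set t : COrb c → ℤ := fun ω => if num ω < num (A ω) then 0 else j' (ψ (A ω)) - j (A ω)
    with ht
  have habarne : ∀ ω, A ω ≠ ω := abar_ne c a ha hio haf hbf
  have hT : ∀ ω, (ell c ω : ℤ) ∣ (t ω + t (A ω) - (j' (ψ ω) - j ω)) := by
    intro ω
    have hne : num ω ≠ num (A ω) := fun h => (habarne ω) (num.injective h.symm)
    by_cases hcase : num ω < num (A ω)
    · have hc2 : ¬ (num (A ω) < num (A (A ω))) := by rw [hAA ω]; exact fun h => absurd rfl (ne_of_gt (hcase.trans h))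
      simp only [ht, if_pos hcase, if_neg hc2, hAA ω]
      have : (0 : ℤ) + (j' (ψ ω) - j ω) - (j' (ψ ω) - j ω) = 0 := by ring
      rw [this]
      exact dvd_zero _
    · have hc2 : num (A ω) < num (A (A ω)) := by
        rw [hAA ω]
        rcases lt_or_gt_of_ne hne with h | h
        · exact absurd h hcase
        · exact h
      simp only [ht, if_neg hcase, if_pos hc2]
      have d1 : (ell c ω : ℤ) ∣ j (A ω) - j ω := hjsym ω
      have d2 : (ell c ω : ℤ) ∣ j' (A' (ψ ω)) - j' (ψ ω) := by
        have := hjsym' (ψ ω); rwa [hψL ω] at this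
      rw [hψA ω]
      have := dvd_sub d2 d1
      convert this using 1
      · rfl
      · ring
  set g : α → α := fun y => ptq c (ψ (orbq c y)) (e y + t (orbq c y)) with hg
  set g2 : α → α := fun y => ptq c (ψ⁻¹ (orbq c y)) (e y - t (ψ⁻¹ (orbq c y))) with hg2
  have hGg : ∀ (ω : COrb c) (i : ℤ), g (ptq c ω i) = ptq c (ψ ω) (i + t ω) := by
    intro ω i
    have horb : orbq c (ptq c ω i) = ω := orb_pt c ω i
    have hey := he (ptq c ω i)
    rw [horb] at hey
    have hdvd : (ell c ω : ℤ) ∣ e (ptq c ω i) - i := (pt_inj c ω _ i).mp hey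
    simp only [hg, horb]
    rw [pt_inj, hψL]
    have : e (ptq c ω i) + t ω - (i + t ω) = e (ptq c ω i) - i := by ring
    rw [this]
    exact hdvd
  have hGg2 : ∀ (ω : COrb c) (i : ℤ), g2 (ptq c ω i) = ptq c (ψ⁻¹ ω) (i - t (ψ⁻¹ ω)) := by
    intro ω i
    have horb : orbq c (ptq c ω i) = ω := orb_pt c ω i
    have hey := he (ptq c ω i)
    rw [horb] at hey
    have hdvd : (ell c ω : ℤ) ∣ e (ptq c ω i) - i := (pt_inj c ω _ i).mp hey
    simp only [hg2, horb]
    rw [pt_inj]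
    have hL : ell c (ψ⁻¹ ω) = ell c ω := by
      conv_rhs => rw [← (show ψ (ψ⁻¹ ω) = ω from (Equiv.Perm.inv_eq_iff_eq.mp rfl).symm)]
      rw [hψL]
    rw [hL]
    have : e (ptq c ω i) - t (ψ⁻¹ ω) - (i - t (ψ⁻¹ ω)) = e (ptq c ω i) - i := by ring
    rw [this]
    exact hdvd
  have hlr : ∀ y, g2 (g y) = y := by
    intro y
    obtain ⟨i, hi⟩ := exists_pt c y
    conv_lhs => rw [← hi]
    rw [hGg, hGg2, (fun (f : Equiv.Perm (COrb c)) x => (Equiv.Perm.inv_eq_iff_eq.mpr rfl : f⁻¹ (f x) = x))]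
    rw [show i + t (orbq c y) - t (orbq c y) = i by ring]
    exact hi
  have hrl : ∀ y, g (g2 y) = y := by
    intro y
    obtain ⟨i, hi⟩ := exists_pt c y
    conv_lhs => rw [← hi]
    rw [hGg2, hGg, (fun (f : Equiv.Perm (COrb c)) x => ((Equiv.Perm.inv_eq_iff_eq.mp rfl).symm : f (f⁻¹ x) = x))]
    rw [show i - t (ψ⁻¹ (orbq c y)) + t (ψ⁻¹ (orbq c y)) = i by ring]
    exact hi
  set ρ : Equiv.Perm α := Equiv.mk g g2 hlr hrl with hρ
  have hρapp : ∀ y, ρ y = g y := fun y => rfl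
  have hgc : ∀ y, g (c y) = c (g y) := by
    intro y
    obtain ⟨i, hi⟩ := exists_pt c y
    rw [← hi, pt_c, hGg, hGg, pt_c]
    congr 1
    ring
  have hga : ∀ y, g (a y) = a' (g y) := by
    intro y
    obtain ⟨i, hi⟩ := exists_pt c y
    rw [← hi, hapt, hGg, hGg, hψA, hapt']
    rw [pt_inj]
    have hL : ell c (A' (ψ (orbq c y))) = ell c (orbq c y) := by
      rw [ell_abar c a' ha' hio', hψL]
    rw [hL]
    have := hT (orbq c y)
    convert this using 1
    ring
  refine ⟨ρ, ?_, ?_⟩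
  · have hcomm : ρ * c = c * ρ := by
      ext y
      simp only [Equiv.Perm.mul_apply, hρapp]
      exact hgc y
    rw [hcomm, mul_assoc]
    simp
  · have hcomm : ρ * a = a' * ρ := by
      ext y
      simp only [Equiv.Perm.mul_apply, hρapp]
      exact hga y
    rw [hcomm, mul_assoc]
    simp

lemma perm_invol_iff (f : Equiv.Perm α) : Function.Involutive f ↔ f * f = 1 := by
  constructor
  · intro h; ext x; simp [Equiv.Perm.mul_apply, h x]
  · intro h x
    have := congrArg (fun p : Equiv.Perm α => p x) h
    simpa using this

lemma inv_eq_self_of_sq {G : Type*} [Group G] {f : G} (h : f * f = 1) : f⁻¹ = f :=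
  inv_eq_of_mul_eq_one_right h

lemma conj_mul_conj {G : Type*} [Group G] (τ x y : G) :
    (τ * x * τ⁻¹) * (τ * y * τ⁻¹) = τ * (x * y) * τ⁻¹ := by group

lemma fpf_conj_perm (τ f : Equiv.Perm α) (hf : ∀ x, f x ≠ x) :
    ∀ x, (τ * f * τ⁻¹) x ≠ x := by
  intro x hx
  simp only [Equiv.Perm.mul_apply] at hx
  apply hf (τ⁻¹ x)
  have := congrArg (fun z => τ⁻¹ z) hx
  simpa using this

lemma sq_conj_inv {G : Type*} [Group G] (x y : G) (hx : x * x = 1) (hy : y * y = 1) :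
    x * (x * y) * x⁻¹ = (x * y)⁻¹ := by
  rw [mul_inv_rev, inv_eq_self_of_sq hx, inv_eq_self_of_sq hy, ← mul_assoc, hx, one_mul]

lemma key (a b a' b' : Equiv.Perm α)
    (ha : Function.Involutive a) (haf : ∀ x, a x ≠ x)
    (hb : Function.Involutive b) (hbf : ∀ x, b x ≠ x)
    (ha' : Function.Involutive a') (ha'f : ∀ x, a' x ≠ x)
    (hb' : Function.Involutive b') (hb'f : ∀ x, b' x ≠ x)
    (h : (a * b).cycleType = (a' * b').cycleType) :
    ∃ σ : Equiv.Perm α, σ * a * σ⁻¹ = a' ∧ σ * b * σ⁻¹ = b' := by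
  obtain ⟨τ, hτ⟩ := isConj_iff.mp (Equiv.Perm.isConj_iff_cycleType_eq.mpr h)
  have hasq : a * a = 1 := (perm_invol_iff a).mp ha
  have hbsq : b * b = 1 := (perm_invol_iff b).mp hb
  have ha'sq : a' * a' = 1 := (perm_invol_iff a').mp ha'
  have hb'sq : b' * b' = 1 := (perm_invol_iff b').mp hb'
  have ha₁sq : (τ*a*τ⁻¹) * (τ*a*τ⁻¹) = 1 := by rw [conj_mul_conj, hasq]; group
  have hb₁sq : (τ*b*τ⁻¹) * (τ*b*τ⁻¹) = 1 := by rw [conj_mul_conj, hbsq]; group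
  have hab₁ : (τ*a*τ⁻¹) * (τ*b*τ⁻¹) = a' * b' := by rw [conj_mul_conj]; exact hτ
  have hb₁eq : (τ*a*τ⁻¹) * (a' * b') = τ*b*τ⁻¹ := by
    rw [← hab₁, ← mul_assoc, ha₁sq, one_mul]
  have hb'eq : a' * (a' * b') = b' := by rw [← mul_assoc, ha'sq, one_mul]
  have hio : (τ*a*τ⁻¹) * (a'*b') * (τ*a*τ⁻¹)⁻¹ = (a'*b')⁻¹ := by
    rw [← hab₁]; exact sq_conj_inv _ _ ha₁sq hb₁sq
  have hio' : a' * (a'*b') * a'⁻¹ = (a'*b')⁻¹ := sq_conj_inv _ _ ha'sq hb'sq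
  obtain ⟨ρ, hρc, hρa⟩ := key2 (a'*b') (τ*a*τ⁻¹) a'
    ((perm_invol_iff _).mpr ha₁sq) ha'
    (fpf_conj_perm τ a haf) ha'f
    (by rw [hb₁eq]; exact fpf_conj_perm τ b hbf)
    (by rw [hb'eq]; exact hb'f)
    hio hio'
  refine ⟨ρ * τ, ?_, ?_⟩
  · have hgrp : (ρ*τ) * a * (ρ*τ)⁻¹ = ρ * (τ*a*τ⁻¹) * ρ⁻¹ := by group
    rw [hgrp, hρa]
  · have hgrp : (ρ*τ) * b * (ρ*τ)⁻¹ = ρ * (τ*b*τ⁻¹) * ρ⁻¹ := by group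
    rw [hgrp, ← hb₁eq, ← conj_mul_conj ρ (τ*a*τ⁻¹) (a'*b'), hρa, hρc, hb'eq]

end ConjHelpers

section PMHelpers

lemma isPM_conj {N : ℕ} (σ f : Equiv.Perm (Fin N)) (hf : IsPM f) : IsPM (σ * f * σ⁻¹) := by
  obtain ⟨h1, h2⟩ := hf
  constructor
  · apply (perm_invol_iff _).mpr
    rw [conj_mul_conj, (perm_invol_iff f).mp h1]
    group
  · exact fpf_conj_perm σ f h2

noncomputable def conjPM {n : ℕ} (σ : Equiv.Perm (Fin (2*n))) (m : PMV n) : PMV n :=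
  ⟨σ * m.1 * σ⁻¹, isPM_conj σ m.1 m.2⟩

lemma dtype_conjPM {n : ℕ} (σ : Equiv.Perm (Fin (2*n))) (x y : PMV n) :
    dtype n (conjPM σ x) (conjPM σ y) = dtype n x y := by
  unfold dtype conjPM
  simp only
  rw [conj_mul_conj, Equiv.Perm.cycleType_conj]

lemma conjPM_inv_left {n : ℕ} (σ : Equiv.Perm (Fin (2*n))) (m : PMV n) :
    conjPM σ⁻¹ (conjPM σ m) = m := by
  apply Subtype.ext
  show σ⁻¹ * (σ * m.1 * σ⁻¹) * σ⁻¹⁻¹ = m.1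
  group

lemma conjPM_inv_right {n : ℕ} (σ : Equiv.Perm (Fin (2*n))) (m : PMV n) :
    conjPM σ (conjPM σ⁻¹ m) = m := by
  apply Subtype.ext
  show σ * (σ⁻¹ * m.1 * σ⁻¹⁻¹) * σ⁻¹ = m.1
  group

end PMHelpers

/-- The matrices `A_λ` form a symmetric commutative association scheme: each `A_λ` is
symmetric, `A_{(1ⁿ)}` (here: the empty cycle type) is the identity, the `A_λ` sum to
the all-ones matrix, products of associates are nonnegative integer combinations of
associates, and the associates pairwise commute. -/
theorem matching_association_scheme (n : ℕ) :
    (∀ μ, (Amat n μ).IsSymm) ∧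
    (Amat n 0 = 1) ∧
    (∑ μ ∈ dtypes n, Amat n μ = Matrix.of fun _ _ => 1) ∧
    (∀ μ ν, ∃ p : Multiset ℕ → ℕ,
      Amat n μ * Amat n ν = ∑ κ ∈ dtypes n, p κ • Amat n κ) ∧
    (∀ μ ν, Amat n μ * Amat n ν = Amat n ν * Amat n μ) := by
  classical
  have hsymm : ∀ μ, (Amat n μ).IsSymm := by
    intro μ
    show (Amat n μ).transpose = Amat n μ
    ext m m'
    simp only [Matrix.transpose_apply, Amat, Matrix.of_apply]
    have hd : dtype n m' m = dtype n m m' := by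
      unfold dtype
      have h : m'.1 * m.1 = m'.1 * (m.1 * m'.1) * m'.1⁻¹ := by group
      rw [h, Equiv.Perm.cycleType_conj]
    rw [hd]
  have h2 : Amat n 0 = 1 := by
    ext m m'
    simp only [Amat, Matrix.of_apply, Matrix.one_apply]
    have hiff : dtype n m m' = 0 ↔ m = m' := by
      unfold dtype
      rw [Equiv.Perm.cycleType_eq_zero]
      constructor
      · intro hmm
        have h : m.1 = m'.1⁻¹ := by rwa [← mul_eq_one_iff_eq_inv]
        rw [inv_eq_self_of_sq ((perm_invol_iff _).mp m'.2.1)] at h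
        exact Subtype.ext h
      · intro hmm; subst hmm
        exact (perm_invol_iff _).mp m.2.1
    by_cases hd : dtype n m m' = 0
    · rw [if_pos hd, if_pos (hiff.mp hd)]
    · rw [if_neg hd, if_neg (fun h => hd (hiff.mpr h))]
  have h3 : ∑ μ ∈ dtypes n, Amat n μ = Matrix.of fun _ _ => (1:ℕ) := by
    ext m m'
    rw [Matrix.sum_apply]
    simp only [Amat, Matrix.of_apply]
    rw [Finset.sum_ite_eq (dtypes n) (dtype n m m') (fun _ => 1)]
    have hmem : dtype n m m' ∈ dtypes n := by
      unfold dtypes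
      exact Finset.mem_image.mpr ⟨(m, m'), Finset.mem_univ _, rfl⟩
    rw [if_pos hmem]
  have h4 : ∀ μ ν, ∃ p : Multiset ℕ → ℕ,
      Amat n μ * Amat n ν = ∑ κ ∈ dtypes n, p κ • Amat n κ := by
    intro μ ν
    set N : PMV n → PMV n → ℕ := fun m m'' =>
      (Finset.univ.filter
        (fun m' : PMV n => dtype n m m' = μ ∧ dtype n m' m'' = ν)).card with hNdef
    have hNinv : ∀ m1 m2 m1' m2' : PMV n,
        dtype n m1 m2 = dtype n m1' m2' → N m1 m2 = N m1' m2' := by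
      intro m1 m2 m1' m2' hd
      obtain ⟨σ, hσ1, hσ2⟩ := key m1.1 m2.1 m1'.1 m2'.1
        m1.2.1 m1.2.2 m2.2.1 m2.2.2 m1'.2.1 m1'.2.2 m2'.2.1 m2'.2.2 hd
      have he1 : m1' = conjPM σ m1 := Subtype.ext hσ1.symm
      have he2 : m2' = conjPM σ m2 := Subtype.ext hσ2.symm
      apply Finset.card_nbij' (fun m' => conjPM σ m') (fun m' => conjPM σ⁻¹ m')
      · intro x hx
        simp only [Finset.mem_coe, Finset.mem_filter, Finset.mem_univ, true_and] at hx ⊢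
        exact ⟨by rw [he1, dtype_conjPM]; exact hx.1,
               by rw [he2, dtype_conjPM]; exact hx.2⟩
      · intro x hx
        simp only [Finset.mem_coe, Finset.mem_filter, Finset.mem_univ, true_and] at hx ⊢
        constructor
        · have h : m1 = conjPM σ⁻¹ m1' := by rw [he1, conjPM_inv_left]
          rw [h, dtype_conjPM]; exact hx.1
        · have h : m2 = conjPM σ⁻¹ m2' := by rw [he2, conjPM_inv_left]
          rw [h, dtype_conjPM]; exact hx.2
      · intro x _; exact conjPM_inv_left σ x
      · intro x _; exact conjPM_inv_right σ x
    refine ⟨fun κ => if h : ∃ q : PMV n × PMV n, dtype n q.1 q.2 = κ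
      then N h.choose.1 h.choose.2 else 0, ?_⟩
    ext m m''
    rw [Matrix.mul_apply, Matrix.sum_apply]
    have hL : ∑ m' : PMV n, Amat n μ m m' * Amat n ν m' m'' = N m m'' := by
      simp only [Amat, Matrix.of_apply]
      have hstep : ∀ m' : PMV n,
          (if dtype n m m' = μ then (1:ℕ) else 0) * (if dtype n m' m'' = ν then 1 else 0)
          = if dtype n m m' = μ ∧ dtype n m' m'' = ν then 1 else 0 := by
        intro m'
        by_cases hα : dtype n m m' = μ <;> by_cases hβ : dtype n m' m'' = ν <;>
          simp [hα, hβ]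
      rw [Finset.sum_congr rfl (fun m' _ => hstep m'), Finset.sum_boole]
      simp [hNdef]
    rw [hL]
    simp only [Matrix.smul_apply, Amat, Matrix.of_apply, smul_eq_mul, mul_ite, mul_one,
      mul_zero]
    rw [Finset.sum_ite_eq (dtypes n) (dtype n m m'')]
    have hmem : dtype n m m'' ∈ dtypes n := by
      unfold dtypes
      exact Finset.mem_image.mpr ⟨(m, m''), Finset.mem_univ _, rfl⟩
    rw [if_pos hmem]
    have hex : ∃ q : PMV n × PMV n, dtype n q.1 q.2 = dtype n m m'' := ⟨(m, m''), rfl⟩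
    rw [dif_pos hex]
    exact (hNinv _ _ _ _ hex.choose_spec).symm
  refine ⟨hsymm, h2, h3, h4, ?_⟩
  intro μ ν
  obtain ⟨p, hp⟩ := h4 μ ν
  have hS : (Amat n μ * Amat n ν).transpose = Amat n μ * Amat n ν := by
    rw [hp, Matrix.transpose_sum]
    apply Finset.sum_congr rfl
    intro κ _
    rw [Matrix.transpose_smul, (hsymm κ).eq]
  calc Amat n μ * Amat n ν = (Amat n μ * Amat n ν).transpose := hS.symm
    _ = (Amat n ν).transpose * (Amat n μ).transpose := Matrix.transpose_mul _ _
    _ = Amat n ν * Amat n μ := by rw [(hsymm ν).eq, (hsymm μ).eq]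
end
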